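/- arXiv:2411.19883 — 14 statements merged into one kernel-verified Lean document; each statement's English description precedes it below -/
import Mathlib

section
/- Let K be an idempotent semifield (a commutative semiring in which every nonzero element has a multiplicative inverse and addition is idempotent, i.e., a + a = a for all a). Then the group of units K^× is torsion-free. -/
/-- A predicate for a monoid to be torsion-free (as in Mathlib of December 2024). -/
def Monoid.IsTorsionFree (G : Type*) [Monoid G] : Prop :=
  ∀ g : G, g ≠ 1 → ¬IsOfFinOrder g

/-- The group of units of an idempotent semifield is torsion-free. -/
theorem units_torsionFree_of_idempotent_semifield
    (K : Type*) [Semifield K] (hidem : ∀ a : K, a + a = a) :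
    Monoid.IsTorsionFree Kˣ := by
  intro u hu1 hu
  apply hu1
  obtain ⟨n, hn, hun⟩ := hu.exists_pow_eq_one
  obtain ⟨m, rfl⟩ := Nat.exists_eq_succ_of_ne_zero hn.ne'
  set x : K := (u : K) with hxdef
  have hx : x ^ (m + 1) = 1 := by
    have := congrArg (Units.val) hun
    simpa using this
  set t : K := ∑ i ∈ Finset.range m, x ^ (i + 1) with ht
  have hs1 : x * (∑ i ∈ Finset.range (m + 1), x ^ i) = t + 1 := by
    rw [Finset.mul_sum]
    simp_rw [← pow_succ']
    rw [Finset.sum_range_succ, hx]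
  have hs2 : (∑ i ∈ Finset.range (m + 1), x ^ i) = t + 1 := by
    rw [Finset.sum_range_succ']
    simp [ht]
  have hsne : (∑ i ∈ Finset.range (m + 1), x ^ i) ≠ 0 := by
    rw [hs2]
    intro h0
    have : (1 : K) = 0 := by
      calc (1 : K) = 0 + 1 := (zero_add 1).symm
        _ = (t + 1) + 1 := by rw [h0]
        _ = t + (1 + 1) := by ring
        _ = t + 1 := by rw [hidem 1]
        _ = 0 := h0
    exact one_ne_zero this
  have hx1 : x = 1 := mul_right_cancel₀ hsne (by rw [hs1, ← hs2, one_mul])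
  exact Units.ext hx1
end

section
/- Let K be a zero-sum-free semifield and G a group. The regular representation K[G] (viewed as a module over itself) is indecomposable: it cannot be written as a direct sum of two nonzero K[G]-submodules. -/
private lemma zsf_sum_eq_zero {K : Type*} [Semifield K]
    (hzsf : ∀ a b : K, a + b = 0 → a = 0 ∧ b = 0)
    {ι : Type*} {s : Finset ι} {f : ι → K} (h : ∑ i ∈ s, f i = 0) :
    ∀ i ∈ s, f i = 0 := by
  classical
  induction s using Finset.cons_induction with
  | empty => simp
  | cons a s ha ih =>
    rw [Finset.sum_cons] at h
    obtain ⟨h1, h2⟩ := hzsf _ _ h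
    intro i hi
    rcases Finset.mem_cons.mp hi with rfl | hi
    · exact h1
    · exact ih h2 i hi

private lemma zsf_mul_ne_zero {K G : Type*} [Semifield K] [Group G]
    (hzsf : ∀ a b : K, a + b = 0 → a = 0 ∧ b = 0)
    {f g : MonoidAlgebra K G} (hf : f ≠ 0) (hg : g ≠ 0) : f * g ≠ 0 := by
  classical
  obtain ⟨x, hx⟩ := (Finsupp.support_nonempty_iff (f := f.coeff)).mpr (by simpa using hf)
  obtain ⟨y, hy⟩ := (Finsupp.support_nonempty_iff (f := g.coeff)).mpr (by simpa using hg)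
  intro h
  have hxy : (f * g).coeff (x * y) = 0 := by rw [h]; rfl
  rw [MonoidAlgebra.mul_apply] at hxy
  have h1 := zsf_sum_eq_zero hzsf hxy x hx
  have h2 := zsf_sum_eq_zero hzsf h1 y hy
  simp only [if_pos rfl] at h2
  rcases mul_eq_zero.mp h2 with h3 | h3
  · exact Finsupp.mem_support_iff.mp hx h3
  · exact Finsupp.mem_support_iff.mp hy h3

/-- The regular representation `K[G]` of a group `G` over a zero-sum-free
semifield `K`, viewed as a module over itself, is indecomposable: it is not
the internal direct sum of two nonzero submodules (direct sum meaning every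
element is uniquely the sum of an element of each). -/
theorem regular_representation_indecomposable
    (K G : Type*) [Semifield K] [Group G]
    (hzsf : ∀ a b : K, a + b = 0 → a = 0 ∧ b = 0) :
    ¬ ∃ p q : Submodule (MonoidAlgebra K G) (MonoidAlgebra K G),
        p ≠ ⊥ ∧ q ≠ ⊥ ∧
        ∀ x : MonoidAlgebra K G, ∃! w : p × q, (w.1 : MonoidAlgebra K G) + (w.2 : MonoidAlgebra K G) = x := by
  rintro ⟨p, q, hp, hq, huniq⟩
  obtain ⟨w, hw1, hwu⟩ := huniq 1
  set e : MonoidAlgebra K G := (w.1 : MonoidAlgebra K G) with he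
  set f : MonoidAlgebra K G := (w.2 : MonoidAlgebra K G) with hf
  -- e = e*e + e*f, and also e = e + 0 : uniqueness gives e*f = 0
  have hee : e * e ∈ p := by
    have := p.smul_mem e w.1.2
    simpa [smul_eq_mul] using this
  have hef : e * f ∈ q := by
    have := q.smul_mem e w.2.2
    simpa [smul_eq_mul] using this
  have hdecomp : e * e + e * f = e := by
    have : e * (e + f) = e * 1 := by rw [hw1]
    simpa [mul_add] using this
  obtain ⟨v, hv1, hvu⟩ := huniq e
  have h1 : (⟨⟨e * e, hee⟩, ⟨e * f, hef⟩⟩ : p × q) = v := hvu _ hdecomp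
  have h2 : ((w.1, (0 : q)) : p × q) = v := hvu _ (by simp; exact he.symm)
  have hef0 : e * f = 0 := by
    have := h1.trans h2.symm
    have h3 := congrArg (fun z : p × q => (z.2 : MonoidAlgebra K G)) this
    simpa using h3
  -- so e = 0 or f = 0
  have hcase : e = 0 ∨ f = 0 := by
    by_contra hc
    push_neg at hc
    exact zsf_mul_ne_zero hzsf hc.1 hc.2 hef0
  rcases hcase with h0 | h0
  · -- e = 0, so f = 1, so everything is in q; contradict p ≠ ⊥
    have hf1 : f = 1 := by rw [h0, zero_add] at hw1; exact hw1
    obtain ⟨a, hap, ha0⟩ := Submodule.exists_mem_ne_zero_of_ne_bot hp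
    have haq : a ∈ q := by
      have := q.smul_mem a w.2.2
      simpa [smul_eq_mul, ← hf, hf1] using this
    obtain ⟨u, hu1, huu⟩ := huniq a
    have k1 : ((⟨a, hap⟩, (0 : q)) : p × q) = u := huu _ (by simp)
    have k2 : (((0 : p), ⟨a, haq⟩) : p × q) = u := huu _ (by simp)
    have := k1.trans k2.symm
    have h3 := congrArg (fun z : p × q => (z.1 : MonoidAlgebra K G)) this
    exact ha0 (by simpa using h3)
  · -- f = 0, so e = 1, so everything is in p; contradict q ≠ ⊥
    have he1 : e = 1 := by rw [h0, add_zero] at hw1; exact hw1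
    obtain ⟨a, haq, ha0⟩ := Submodule.exists_mem_ne_zero_of_ne_bot hq
    have hap : a ∈ p := by
      have := p.smul_mem a w.1.2
      simpa [smul_eq_mul, ← he, he1] using this
    obtain ⟨u, hu1, huu⟩ := huniq a
    have k1 : ((⟨a, hap⟩, (0 : q)) : p × q) = u := huu _ (by simp)
    have k2 : (((0 : p), ⟨a, haq⟩) : p × q) = u := huu _ (by simp)
    have := k1.trans k2.symm
    have h3 := congrArg (fun z : p × q => (z.2 : MonoidAlgebra K G)) this
    exact ha0 (by simpa using h3.symm)
end

section
/- Let M be a finitely generated module over the Boolean semifield 𝔹 = {0,1} (with 1 + 1 = 1). Then there is an order-reversing bijection between M and its dual M^∨ = Hom_𝔹(M, 𝔹), given by sending m to the homomorphism whose kernel is {y ∈ M : y ≤ m}, where y ≤ m means y + m = m. -/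
/-- For a finitely generated module `M` over the Boolean semifield
`𝔹 = {0,1}` (here an arbitrary two-element idempotent semiring `B`), there is
an order-reversing bijection `M ≃ Hom_𝔹(M,𝔹)` sending `m` to the homomorphism
whose kernel is `{y | y ≤ m}`, where `y ≤ m` means `y + m = m`. -/
theorem boolean_dual_order_reversing_bijection
    (B M : Type*) [CommSemiring B]
    (htwo : ∀ a : B, a = 0 ∨ a = 1) (hidem : (1 : B) + 1 = 1) (hne : (0 : B) ≠ 1)
    [AddCommMonoid M] [Module B M] [Module.Finite B M] :
    ∃ f : M ≃ (M →ₗ[B] B),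
      (∀ m y : M, f m y = 0 ↔ y + m = m) ∧
      (∀ a b : M, a + b = b ↔ ∀ x : M, f b x + f a x = f a x) := by
  classical
  have one_add : ∀ a : B, 1 + a = 1 := by
    intro a; rcases htwo a with h | h <;> simp [h, hidem]
  have add_one : ∀ a : B, a + 1 = 1 := fun a => by rw [add_comm]; exact one_add a
  have add_eq_zero : ∀ a b : B, a + b = 0 → a = 0 ∧ b = 0 := by
    intro a b h
    rcases htwo a with ha | ha <;> rcases htwo b with hb | hb <;> subst ha <;> subst hb <;>
      simp_all [one_add, add_one]
  have Midem : ∀ x : M, x + x = x := by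
    intro x
    rw [← one_smul B x, ← add_smul, hidem]
  have le_trans' : ∀ x a b : M, x + a = a → a + b = b → x + b = b := by
    intro x a b h1 h2
    rw [← h2, ← add_assoc, h1]
  have add_le : ∀ y z m : M, (y + z) + m = m ↔ (y + m = m ∧ z + m = m) := by
    intro y z m
    constructor
    · intro h
      constructor
      · have : y + (y + z) = y + z := by rw [← add_assoc, Midem]
        exact le_trans' _ _ _ this h
      · have : z + (y + z) = y + z := by
          rw [add_comm y z, ← add_assoc, Midem]
        exact le_trans' _ _ _ this h
    · rintro ⟨h1, h2⟩
      rw [add_assoc, h2, h1]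
  let F : M → (M →ₗ[B] B) := fun m =>
    { toFun := fun y => if y + m = m then 0 else 1
      map_add' := by
        intro y z
        by_cases hy : y + m = m <;> by_cases hz : z + m = m <;>
          simp [hy, hz, add_le, one_add, add_one]
      map_smul' := by
        intro c y
        rcases htwo c with hc | hc <;> subst hc
        · simp [zero_smul, zero_add]
        · simp }
  have Fval : ∀ m y : M, F m y = if y + m = m then 0 else 1 := fun _ _ => rfl
  have Fmem : ∀ m y : M, F m y = 0 ↔ y + m = m := by
    intro m y
    rw [Fval]
    by_cases h : y + m = m <;> simp [h]
    exact fun e => hne e.symm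
  -- injectivity
  have Finj : Function.Injective F := by
    intro a b hab
    have h1 : F a a = 0 := (Fmem a a).mpr (Midem a)
    have h2 : F b b = 0 := (Fmem b b).mpr (Midem b)
    have hba : b + a = a := (Fmem a b).mp (by rw [hab]; exact h2)
    have hab' : a + b = b := (Fmem b a).mp (by rw [← hab]; exact h1)
    calc a = b + a := hba.symm
      _ = a + b := add_comm _ _
      _ = b := hab'
  -- surjectivity
  have Fsurj : Function.Surjective F := by
    intro φ
    obtain ⟨S, hS⟩ : (⊤ : Submodule B M).FG := Module.Finite.fg_top
    set T := S.filter (fun s => φ s = 0) with hT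
    set m₀ : M := ∑ s ∈ T, s with hm₀
    have hφm₀ : φ m₀ = 0 := by
      rw [hm₀, map_sum]
      exact Finset.sum_eq_zero fun s hs => (Finset.mem_filter.mp hs).2
    have hker : ∀ y : M, φ y = 0 → y + m₀ = m₀ := by
      intro y hy
      have hy' : y ∈ Submodule.span B (S : Set M) := by rw [hS]; trivial
      induction hy' using Submodule.span_induction with
      | mem x hx =>
        have hxT : x ∈ T := Finset.mem_filter.mpr ⟨hx, hy⟩
        rw [hm₀, ← Finset.add_sum_erase _ _ hxT, ← add_assoc, Midem]
      | zero => rw [zero_add]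
      | add x z hx hz ihx ihz =>
        rw [map_add] at hy
        obtain ⟨h1, h2⟩ := add_eq_zero _ _ hy
        exact (add_le x z m₀).mpr ⟨ihx h1, ihz h2⟩
      | smul c x hx ih =>
        rcases htwo c with hc | hc <;> subst hc
        · rw [zero_smul, zero_add]
        · rw [one_smul] at *; exact ih hy
    refine ⟨m₀, LinearMap.ext fun y => ?_⟩
    rw [Fval]
    by_cases h : y + m₀ = m₀
    · rw [if_pos h]
      have : φ y + φ m₀ = φ m₀ := by rw [← map_add, h]
      rw [hφm₀, add_zero] at this
      exact this.symm
    · rw [if_neg h]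
      rcases htwo (φ y) with hy | hy
      · exact absurd (hker y hy) h
      · exact hy.symm
  refine ⟨Equiv.ofBijective F ⟨Finj, Fsurj⟩, fun m y => Fmem m y, fun a b => ?_⟩
  show a + b = b ↔ ∀ x : M, F b x + F a x = F a x
  constructor
  · intro hab x
    by_cases hx : x + a = a
    · have hxb : x + b = b := le_trans' _ _ _ hx hab
      rw [(Fmem b x).mpr hxb, (Fmem a x).mpr hx, add_zero]
    · rw [Fval a x, if_neg hx, add_one]
  · intro h
    have ha : F a a = 0 := (Fmem a a).mpr (Midem a)
    have := h a
    rw [ha, add_zero] at this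
    exact (Fmem b a).mp this
end

section
/- Let M be a finitely generated 𝔹-module. Then M is reflexive: the canonical map M → Hom_𝔹(Hom_𝔹(M,𝔹),𝔹), sending m to evaluation at m, is an isomorphism of 𝔹-modules. -/
open scoped Classical

section Aux

variable {B : Type*} [CommSemiring B]
variable {M : Type*} [AddCommMonoid M] [Module B M]

/-- In an idempotent semiring, `a + b = 0 → a = 0`. -/
private lemma baux_add_eq_zero (htwo : ∀ a : B, a = 0 ∨ a = 1)
    (hidem : (1 : B) + 1 = 1) (hne : (0 : B) ≠ 1) {a b : B} (h : a + b = 0) : a = 0 := by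
  rcases htwo a with ha | ha
  · exact ha
  · exfalso
    subst ha
    rcases htwo b with hb | hb <;> subst hb
    · rw [add_zero] at h; exact hne h.symm
    · rw [hidem] at h; exact hne h.symm

private lemma baux_ne_zero (htwo : ∀ a : B, a = 0 ∨ a = 1) {a : B} (h : a ≠ 0) : a = 1 := by
  rcases htwo a with h0 | h1
  · exact absurd h0 h
  · exact h1

/-- Elements of a module over an idempotent semiring are additively idempotent. -/
private lemma midem (hidem : (1 : B) + 1 = 1) (m : M) : m + m = m := by
  have h : ((1 : B) + 1) • m = m := by rw [hidem, one_smul]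
  rwa [add_smul, one_smul] at h

private lemma bfinite (htwo : ∀ a : B, a = 0 ∨ a = 1) : Finite B := by
  apply Finite.of_surjective (fun b : Bool => if b then (1 : B) else 0)
  intro a
  rcases htwo a with h | h
  · exact ⟨false, h.symm⟩
  · exact ⟨true, h.symm⟩

/-- A finitely generated module over the Boolean semiring is finite. -/
private lemma mfinite (htwo : ∀ a : B, a = 0 ∨ a = 1) [Module.Finite B M] : Finite M := by
  have hB : Finite B := bfinite htwo
  obtain ⟨s, hs⟩ := Module.Finite.fg_top (R := B) (M := M)
  have hsurj : Function.Surjective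
      (fun f : (↑(s : Set M) → B) => ∑ x ∈ s.attach, f x • (x : M)) := by
    intro m
    have hm : m ∈ Submodule.span B (s : Set M) := hs ▸ Submodule.mem_top
    rw [Submodule.mem_span_finset] at hm
    obtain ⟨f, -, hf⟩ := hm
    refine ⟨fun x => f x, ?_⟩
    simpa [Finset.sum_attach s (fun x => f x • x)] using hf
  exact Finite.of_surjective _ hsurj

/-- Classification of duals of a finite Boolean module: every linear functional
is "non-membership in a principal ideal". -/
private lemma dual_classify (htwo : ∀ a : B, a = 0 ∨ a = 1)
    (hidem : (1 : B) + 1 = 1) (hne : (0 : B) ≠ 1) [Finite M]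
    (φ : M →ₗ[B] B) : ∃ a : M, ∀ x : M, φ x = 0 ↔ x + a = a := by
  cases nonempty_fintype M
  classical
  set t : Finset M := Finset.univ.filter (fun x => φ x = 0) with ht
  set a : M := ∑ x ∈ t, x with ha
  have hφa : φ a = 0 := by
    rw [ha, map_sum]
    apply Finset.sum_eq_zero
    intro x hx
    exact (Finset.mem_filter.mp hx).2
  refine ⟨a, fun x => ⟨fun hx => ?_, fun hx => ?_⟩⟩
  · have hxt : x ∈ t := Finset.mem_filter.mpr ⟨Finset.mem_univ x, hx⟩
    have h1 : x + ∑ y ∈ t.erase x, y = a := Finset.add_sum_erase t id hxt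
    calc x + a = x + (x + ∑ y ∈ t.erase x, y) := by rw [h1]
      _ = (x + x) + ∑ y ∈ t.erase x, y := by rw [add_assoc]
      _ = x + ∑ y ∈ t.erase x, y := by rw [midem hidem]
      _ = a := h1
  · have h : φ x + φ a = 0 := by rw [← map_add, hx, hφa]
    exact baux_add_eq_zero htwo hidem hne h

/-- The "principal-ideal" functional attached to `n : M`. -/
private noncomputable def leFun (htwo : ∀ a : B, a = 0 ∨ a = 1)
    (hidem : (1 : B) + 1 = 1) (n : M) : M →ₗ[B] B where
  toFun x := if x + n = n then 0 else 1
  map_add' x y := by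
    by_cases hx : x + n = n <;> by_cases hy : y + n = n
    · have h : x + y + n = n := by
        calc x + y + n = x + (y + n) := by rw [add_assoc]
          _ = x + n := by rw [hy]
          _ = n := hx
      simp [h, hx, hy]
    · have h : ¬(x + y + n = n) := by
        intro hcon
        apply hy
        have : y + n = y + (x + y + n) := by rw [hcon]
        rw [this]
        calc y + (x + y + n) = x + ((y + y) + n) := by abel
          _ = x + (y + n) := by rw [midem hidem]
          _ = x + y + n := by rw [add_assoc]
          _ = n := hcon
      simp [h, hx, hy]
    · have h : ¬(x + y + n = n) := by
        intro hcon
        apply hx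
        have : x + n = x + (x + y + n) := by rw [hcon]
        rw [this]
        calc x + (x + y + n) = (x + x) + y + n := by abel
          _ = x + y + n := by rw [midem hidem]
          _ = n := hcon
      simp [h, hx, hy, hidem]
    · have h : ¬(x + y + n = n) := by
        intro hcon
        apply hx
        have : x + n = x + (x + y + n) := by rw [hcon]
        rw [this]
        calc x + (x + y + n) = (x + x) + y + n := by abel
          _ = x + y + n := by rw [midem hidem]
          _ = n := hcon
      simp [h, hx, hy, hidem]
  map_smul' c x := by
    rcases htwo c with hc | hc <;> subst hc
    · simp [zero_smul, zero_add]
    · simp [one_smul]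

private lemma leFun_apply (htwo : ∀ a : B, a = 0 ∨ a = 1)
    (hidem : (1 : B) + 1 = 1) (n x : M) :
    leFun htwo hidem n x = if x + n = n then 0 else 1 := rfl

end Aux

/-- A finitely generated module over the Boolean semifield (an arbitrary
two-element idempotent semiring `B`) is reflexive: the canonical evaluation
map into the double dual is bijective. -/
theorem boolean_module_reflexive
    (B M : Type*) [CommSemiring B]
    (htwo : ∀ a : B, a = 0 ∨ a = 1) (hidem : (1 : B) + 1 = 1) (hne : (0 : B) ≠ 1)
    [AddCommMonoid M] [Module B M] [Module.Finite B M] :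
    Function.Bijective (Module.Dual.eval B M) := by
  have hMfin : Finite M := mfinite htwo
  have hBfin : Finite B := bfinite htwo
  have hDfin : Finite (Module.Dual B M) :=
    Finite.of_injective (fun φ : Module.Dual B M => (φ : M → B)) DFunLike.coe_injective
  constructor
  · -- injectivity
    intro m m' h
    have hmm' : ∀ n : M, leFun htwo hidem n m = leFun htwo hidem n m' := by
      intro n
      have := congrArg (fun Φ : Module.Dual B (Module.Dual B M) => Φ (leFun htwo hidem n)) h
      simpa [Module.Dual.eval] using this
    have h1 : m + m' = m' := by
      have := hmm' m'
      rw [leFun_apply, leFun_apply, if_pos (midem hidem m')] at this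
      by_contra hcon
      rw [if_neg hcon] at this
      exact hne this.symm
    have h2 : m' + m = m := by
      have := hmm' m
      rw [leFun_apply, leFun_apply, if_pos (midem hidem m)] at this
      by_contra hcon
      rw [if_neg hcon] at this
      exact hne this
    rw [← h1, add_comm, h2]
  · -- surjectivity
    intro Φ
    obtain ⟨ψ, hψ⟩ := dual_classify htwo hidem hne Φ
    obtain ⟨a, haψ⟩ := dual_classify htwo hidem hne ψ
    refine ⟨a, ?_⟩
    apply LinearMap.ext
    intro φ
    have key : Module.Dual.eval B M a φ = φ a := rfl
    rw [key]
    -- show `φ a = Φ φ` by comparing vanishing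
    have hiff : φ a = 0 ↔ Φ φ = 0 := by
      constructor
      · intro hφa
        rw [hψ]
        apply LinearMap.ext
        intro x
        show φ x + ψ x = ψ x
        rcases htwo (ψ x) with h0 | h1
        · -- ψ x = 0, so x + a = a, so φ x = 0
          have hxa : x + a = a := (haψ x).mp h0
          have : φ x + φ a = 0 := by rw [← map_add, hxa, hφa]
          have hφx : φ x = 0 := baux_add_eq_zero htwo hidem hne this
          rw [hφx, h0, add_zero]
        · rw [h1]
          rcases htwo (φ x) with h | h <;> rw [h]
          · rw [zero_add]
          · exact hidem
      · intro hΦ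
        have hle : φ + ψ = ψ := (hψ φ).mp hΦ
        have := congrArg (fun f : Module.Dual B M => f a) hle
        simp only [LinearMap.add_apply] at this
        have hψa : ψ a = 0 := (haψ a).mpr (midem hidem a)
        rw [hψa, add_zero] at this
        exact this
    rcases htwo (φ a) with h | h
    · rw [h]
      exact (hiff.mp h).symm
    · rw [h]
      rcases htwo (Φ φ) with h0 | h1
      · have := hiff.mpr h0
        rw [h] at this
        exact absurd this.symm hne
      · exact h1.symm
end

section
/- Let G be a finite group and M a nonzero cyclic 𝔹[G]-module generated by v, with stabilizer H = {g ∈ G : g·v = v}. Then the set {g·v : gH ∈ G/H} (one element per left coset) is a quasi-basis of M as a 𝔹-module: it generates M, and any relation g·v = Σ_k a_k (k·v) (sum over coset representatives, a_k ∈ 𝔹) forces a_k = 0 for kH ≠ gH and a_g = 1. In particular M is quasi-free as a 𝔹-module. -/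
/-- A nonzero cyclic `𝔹[G]`-module (for `G` a finite group) is quasi-free as
a `𝔹`-module: given a generator `v` with stabilizer `H` and a set `S` of left
coset representatives for `H`, the family `{s • v | s ∈ S}` generates `M`,
and any relation `g • v = ∑_{k ∈ T} k • v` with `T ⊆ S` and `g ∈ S` forces
`T = {g}` (i.e. the coefficients are `δ`'s).  Over `𝔹` a linear combination
is exactly a sum over a subset, so this is quasi-independence. -/
theorem cyclic_boolean_group_module_quasiFree
    (G M : Type*) [Group G] [Fintype G] [AddCommMonoid M]
    (hidem : ∀ x : M, x + x = x) [DistribMulAction G M]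
    (v : M) (hv : v ≠ 0)
    (hgen : ∀ x : M, x ∈ AddSubmonoid.closure (Set.range fun g : G => g • v))
    (S : Finset G)
    (hS : ∀ g : G, ∃! s, s ∈ S ∧ s⁻¹ * g ∈ MulAction.stabilizer G v) :
    (∀ x : M, x ∈ AddSubmonoid.closure ((fun g : G => g • v) '' ↑S)) ∧
    (∀ g ∈ S, ∀ T ⊆ S, g • v = ∑ k ∈ T, k • v → T = {g}) := by
  constructor
  · intro x
    refine AddSubmonoid.closure_mono ?_ (hgen x)
    rintro _ ⟨g, rfl⟩
    obtain ⟨s, ⟨hsS, hs⟩, _⟩ := hS g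
    have h1 : (s⁻¹ * g) • v = v := hs
    have : g • v = s • v := by
      conv_lhs => rw [show g = s * (s⁻¹ * g) by group]
      rw [mul_smul, h1]
    exact ⟨s, hsS, this.symm⟩
  · intro g hg T hT heq
    classical
    have key : ∀ a : G, a • v + v = v → a • v = v := by
      intro a ha
      have hpow : ∀ i : ℕ, a ^ (i + 1) • v + a ^ i • v = a ^ i • v := by
        intro i
        have := congrArg (fun x => a ^ i • x) ha
        simpa [smul_add, ← mul_smul, ← pow_succ] using this
      have hchain : ∀ i : ℕ, a ^ i • v + v = v := by
        intro i
        induction i with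
        | zero => simpa using hidem v
        | succ n ih =>
          calc a ^ (n + 1) • v + v = a ^ (n + 1) • v + (a ^ n • v + v) := by rw [ih]
            _ = (a ^ (n + 1) • v + a ^ n • v) + v := by rw [add_assoc]
            _ = a ^ n • v + v := by rw [hpow n]
            _ = v := ih
      have h1 : orderOf a - 1 + 1 = orderOf a := Nat.succ_pred_eq_of_pos (orderOf_pos a)
      have h2 : v + a • v = a • v := by
        have := congrArg (fun x => a • x) (hchain (orderOf a - 1))
        simp only [smul_add, ← mul_smul, ← pow_succ'] at this
        rw [h1, pow_orderOf_eq_one, one_smul] at this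
        exact this
      calc a • v = v + a • v := h2.symm
        _ = a • v + v := add_comm _ _
        _ = v := ha
    have hmem : ∀ k ∈ T, k = g := by
      intro k hk
      have hle : k • v + g • v = g • v := by
        rw [heq, ← Finset.add_sum_erase T _ hk, ← add_assoc, hidem]
      have : (g⁻¹ * k) • v + v = v := by
        have := congrArg (fun x => g⁻¹ • x) hle
        simpa [smul_add, ← mul_smul] using this
      have hstab : g⁻¹ * k ∈ MulAction.stabilizer G v := key _ this
      obtain ⟨s, _, huniq⟩ := hS k
      have e1 : g = s := huniq g ⟨hg, hstab⟩
      have e2 : k = s := huniq k ⟨hT hk, by simp⟩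
      rw [e1, e2]
    have hne : T.Nonempty := by
      by_contra h
      rw [Finset.not_nonempty_iff_eq_empty] at h
      rw [h, Finset.sum_empty] at heq
      apply hv
      have := congrArg (fun x => g⁻¹ • x) heq
      simpa [← mul_smul] using this
    obtain ⟨k, hk⟩ := hne
    rw [Finset.eq_singleton_iff_unique_mem]
    exact ⟨hmem k hk ▸ hk, hmem⟩
end

section
/- Let G be a torsion group acting on a 𝔹-module M, and suppose M is generated as a 𝔹[G]-module by n elements. Then the poset of join-irreducible elements of M contains no chain of length greater than n (i.e., no chain with more than n elements). -/
private lemma torsion_no_strict_smul {G M : Type*} [Group G] [AddCommMonoid M]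
    [DistribMulAction G M] (hidem : ∀ x : M, x + x = x)
    (s : G) (hs : IsOfFinOrder s) (a b : M)
    (hab : a + b = b) (hne : a ≠ b) (hsa : s • b = a) : False := by
  have E : ∀ t : ℕ, s ^ (t + 1) • b + s ^ t • b = s ^ t • b := by
    intro t
    induction t with
    | zero => simpa [hsa] using hab
    | succ t ih =>
      have h := congrArg (s • ·) ih
      simpa [smul_add, ← mul_smul, ← pow_succ'] using h
  have F : ∀ t : ℕ, s ^ (t + 1) • b + a = a := by
    intro t
    induction t with
    | zero => simpa [hsa] using hidem a
    | succ t ih =>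
      calc s ^ (t + 2) • b + a = s ^ (t + 2) • b + (s ^ (t + 1) • b + a) := by rw [ih]
        _ = (s ^ (t + 2) • b + s ^ (t + 1) • b) + a := by rw [add_assoc]
        _ = s ^ (t + 1) • b + a := by rw [E (t + 1)]
        _ = a := ih
  obtain ⟨m, hm⟩ : ∃ m, orderOf s = m + 1 :=
    ⟨orderOf s - 1, (Nat.succ_pred_eq_of_pos hs.orderOf_pos).symm⟩
  have hb : s ^ (m + 1) • b = b := by rw [← hm, pow_orderOf_eq_one, one_smul]
  have h1 : b + a = a := by rw [← hb]; exact F m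
  exact hne ((add_comm a b ▸ h1).symm.trans hab)

/-- If a torsion group `G` acts on a module `M` over the Boolean semifield
(an idempotent commutative monoid) and `M` is generated as a `𝔹[G]`-module by
`n` elements, then the poset of join-irreducible elements of `M` (with
`x ≤ y ↔ x + y = y`) contains no chain with more than `n` elements. -/
theorem no_long_chain_of_joinIrreducible
    (G M : Type*) [Group G] [AddCommMonoid M] (hidem : ∀ x : M, x + x = x)
    [DistribMulAction G M] (htor : ∀ g : G, IsOfFinOrder g)
    (n : ℕ) (x : Fin n → M)
    (hgen : ∀ m : M,
      m ∈ AddSubmonoid.closure {y : M | ∃ (g : G) (i : Fin n), y = g • x i})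
    (c : Fin (n + 1) → M)
    (hirr : ∀ i, c i ≠ 0 ∧ ∀ a b : M, c i = a + b → c i = a ∨ c i = b)
    (hchain : ∀ i j : Fin (n + 1), i < j → c i + c j = c j ∧ c i ≠ c j) :
    False := by
  have hrep : ∀ j : Fin (n + 1), ∃ (g : G) (i : Fin n), c j = g • x i := by
    intro j
    have key : ∀ m ∈ AddSubmonoid.closure {y : M | ∃ (g : G) (i : Fin n), y = g • x i},
        c j = m → ∃ (g : G) (i : Fin n), c j = g • x i := by
      intro m hm
      induction hm using AddSubmonoid.closure_induction with
      | mem y hy => intro he; obtain ⟨g, i, rfl⟩ := hy; exact ⟨g, i, he⟩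
      | zero => intro he; exact absurd he (hirr j).1
      | add a b ha hb iha ihb =>
        intro he
        rcases (hirr j).2 a b he with h | h
        · exact iha h
        · exact ihb h
    exact key _ (hgen (c j)) rfl
  choose g i hgi using hrep
  obtain ⟨j, k, hjk, hik⟩ := Fintype.exists_ne_map_eq_of_card_lt i (by simp)
  rcases lt_or_gt_of_ne hjk with h | h
  · obtain ⟨hle, hne⟩ := hchain j k h
    refine torsion_no_strict_smul hidem (g j * (g k)⁻¹) (htor _) (c j) (c k) hle hne ?_
    rw [hgi k, hgi j, mul_smul, inv_smul_smul, hik]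
  · obtain ⟨hle, hne⟩ := hchain k j h
    refine torsion_no_strict_smul hidem (g k * (g j)⁻¹) (htor _) (c k) (c j) hle hne ?_
    rw [hgi k, hgi j, mul_smul, inv_smul_smul, hik]
end

section
/- Let G be a group and K a zero-sum-free semifield, and let V = K^n be a representation of G. Then V is indecomposable as a representation if and only if G acts transitively on the set of basis lines of V. -/
open Submodule

section Aux
variable {K : Type*} [Semifield K] {n : ℕ}

lemma zsf_sum_zero {ι : Type*} (hzsf : ∀ a b : K, a + b = 0 → a = 0 ∧ b = 0)
    (s : Finset ι) (f : ι → K) (h : ∑ i ∈ s, f i = 0) : ∀ i ∈ s, f i = 0 := by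
  classical
  induction s using Finset.induction_on with
  | empty => intro i hi; simp at hi
  | insert _ _ ha ih =>
    rename_i a s'
    rw [Finset.sum_insert ha] at h
    obtain ⟨h1, h2⟩ := hzsf _ _ h
    intro i hi
    rcases Finset.mem_insert.mp hi with rfl | hi'
    · exact h1
    · exact ih h2 i hi'

lemma pi_eq_sum (x : Fin n → K) :
    x = ∑ m, x m • (Pi.single m (1:K) : Fin n → K) := by
  simp only [← Pi.single_smul, smul_eq_mul, mul_one]
  exact (Finset.univ_sum_single x).symm

lemma map_apply_coord (f : (Fin n → K) →ₗ[K] (Fin n → K)) (x : Fin n → K) (k : Fin n) :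
    f x k = ∑ m, x m * f (Pi.single m 1) k := by
  conv_lhs => rw [pi_eq_sum x]
  rw [map_sum, Finset.sum_apply]
  exact Finset.sum_congr rfl fun m _ => by rw [map_smul, Pi.smul_apply, smul_eq_mul]

variable {G : Type*} [Group G]

lemma rep_cancel (ρ : Representation K G (Fin n → K)) (g : G) (x : Fin n → K) :
    ρ g⁻¹ (ρ g x) = x := by
  have h : (ρ g⁻¹ * ρ g) x = (1 : Module.End K (Fin n → K)) x := by
    rw [← map_mul, inv_mul_cancel, map_one]
  simpa using h

lemma rep_monomial (hzsf : ∀ a b : K, a + b = 0 → a = 0 ∧ b = 0)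
    (ρ : Representation K G (Fin n → K)) (g : G) (i : Fin n) :
    ∃ (j : Fin n) (c : K), c ≠ 0 ∧ ρ g (Pi.single i 1) = c • (Pi.single j (1:K) : Fin n → K) := by
  classical
  have hBA : ∀ (i' k : Fin n),
      ∑ m, ρ g (Pi.single i' 1) m * ρ g⁻¹ (Pi.single m 1) k = if k = i' then 1 else 0 := by
    intro i' k
    have h1 := congrFun (rep_cancel ρ g (Pi.single i' 1)) k
    rw [map_apply_coord] at h1
    rw [h1, Pi.single_apply]
  have hAB : ∀ (i' k : Fin n),
      ∑ m, ρ g⁻¹ (Pi.single i' 1) m * ρ g (Pi.single m 1) k = if k = i' then 1 else 0 := by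
    intro i' k
    have h0 := rep_cancel ρ g⁻¹ (Pi.single i' 1)
    rw [inv_inv] at h0
    have h1 := congrFun h0 k
    rw [map_apply_coord] at h1
    rw [h1, Pi.single_apply]
  have hex : ∃ m, ρ g (Pi.single i 1) m ≠ 0 := by
    by_contra h
    push_neg at h
    have h1 := hBA i i
    rw [if_pos rfl, Finset.sum_eq_zero (fun m _ => by rw [h m, zero_mul])] at h1
    exact zero_ne_one h1
  obtain ⟨j, hj⟩ := hex
  have huniq : ∀ k, k ≠ j → ρ g (Pi.single i 1) k = 0 := by
    intro k hk
    by_contra hAk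
    have hBj : ∀ r, r ≠ i → ρ g⁻¹ (Pi.single j 1) r = 0 := by
      intro r hr
      have h0 := hBA i r
      rw [if_neg hr] at h0
      have := zsf_sum_zero hzsf _ _ h0 j (Finset.mem_univ j)
      exact (mul_eq_zero.mp this).resolve_left hj
    have hBij : ρ g⁻¹ (Pi.single j 1) i = 0 := by
      have h0 := hAB j k
      rw [if_neg hk] at h0
      have := zsf_sum_zero hzsf _ _ h0 i (Finset.mem_univ i)
      exact (mul_eq_zero.mp this).resolve_right hAk
    have h1 := hAB j j
    rw [if_pos rfl, Finset.sum_eq_zero] at h1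
    · exact zero_ne_one h1
    · intro m _
      rcases eq_or_ne m i with rfl | hm
      · rw [hBij, zero_mul]
      · rw [hBj m hm, zero_mul]
  refine ⟨j, ρ g (Pi.single i 1) j, hj, ?_⟩
  funext k
  rw [Pi.smul_apply, Pi.single_apply, smul_eq_mul]
  rcases eq_or_ne k j with rfl | hk
  · rw [if_pos rfl, mul_one]
  · rw [if_neg hk, mul_zero, huniq k hk]

lemma single_one_ne_zero (i : Fin n) : (Pi.single i (1:K) : Fin n → K) ≠ 0 :=
  fun h => one_ne_zero (α := K) (by simpa using congrFun h i)

lemma map_span_of_monomial (ρ : Representation K G (Fin n → K)) (g : G) {i j : Fin n}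
    {c : K} (hc : c ≠ 0) (h : ρ g (Pi.single i 1) = c • (Pi.single j (1:K) : Fin n → K)) :
    Submodule.map (ρ g) (Submodule.span K {Pi.single i (1 : K)}) =
      Submodule.span K {Pi.single j (1 : K)} := by
  rw [Submodule.map_span, Set.image_singleton, h,
    Submodule.span_singleton_smul_eq (isUnit_iff_ne_zero.mpr hc)]

lemma monomial_of_map_span (ρ : Representation K G (Fin n → K)) (g : G) {i j : Fin n}
    (h : Submodule.map (ρ g) (Submodule.span K {Pi.single i (1 : K)}) =
      Submodule.span K {Pi.single j (1 : K)}) :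
    ∃ c : K, c ≠ 0 ∧ ρ g (Pi.single i 1) = c • (Pi.single j (1:K) : Fin n → K) := by
  have hmem : ρ g (Pi.single i 1) ∈ Submodule.span K {(Pi.single j (1:K) : Fin n → K)} := by
    rw [← h]
    exact Submodule.mem_map_of_mem (Submodule.mem_span_singleton_self _)
  obtain ⟨c, hc⟩ := Submodule.mem_span_singleton.mp hmem
  refine ⟨c, ?_, hc.symm⟩
  rintro rfl
  rw [zero_smul] at hc
  have h0 : Pi.single i (1:K) = (0 : Fin n → K) := by
    have := rep_cancel ρ g (Pi.single i 1)
    rw [← hc, map_zero] at this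
    exact this.symm
  exact single_one_ne_zero i h0

end Aux

/-- A representation `V = K^n` of a group `G` over a zero-sum-free semifield
`K` is indecomposable (not an internal direct sum of two nonzero invariant
submodules) if and only if `G` acts transitively on the set of basis lines
(the lines spanned by the standard basis vectors, which over such a semiring
is the set of basis lines for any basis). -/
theorem indecomposable_iff_transitive_on_basis_lines
    (K G : Type*) [Semifield K] [Group G]
    (hzsf : ∀ a b : K, a + b = 0 → a = 0 ∧ b = 0)
    (n : ℕ) (ρ : Representation K G (Fin n → K)) :
    (¬ ∃ p q : Submodule K (Fin n → K),
        (∀ g : G, ∀ y ∈ p, ρ g y ∈ p) ∧ (∀ g : G, ∀ y ∈ q, ρ g y ∈ q) ∧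
        p ≠ ⊥ ∧ q ≠ ⊥ ∧
        ∀ z : Fin n → K, ∃! w : p × q, (w.1 : Fin n → K) + (w.2 : Fin n → K) = z)
      ↔ ∀ i j : Fin n, ∃ g : G,
          Submodule.map (ρ g) (Submodule.span K {Pi.single i (1 : K)}) =
            Submodule.span K {Pi.single j (1 : K)} := by
  classical
  constructor
  · -- indecomposable → transitive
    intro hI i j
    by_contra hij
    push_neg at hij
    apply hI
    set S : Set (Fin n) :=
      {m | ∃ g : G, Submodule.map (ρ g) (Submodule.span K {Pi.single i (1 : K)}) =
        Submodule.span K {Pi.single m (1 : K)}} with hSdef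
    have hiS : i ∈ S := ⟨1, by rw [map_one, Module.End.one_eq_id, Submodule.map_id]⟩
    have hjS : j ∉ S := fun hj => by obtain ⟨g, hg⟩ := hj; exact hij g hg
    have hclosed : ∀ m ∈ S, ∀ (g : G) (k : Fin n),
        Submodule.map (ρ g) (Submodule.span K {Pi.single m (1 : K)}) =
          Submodule.span K {Pi.single k (1 : K)} → k ∈ S := by
      rintro m ⟨g', hg'⟩ g k hk
      exact ⟨g * g', by rw [map_mul, Module.End.mul_eq_comp, Submodule.map_comp, hg', hk]⟩
    have hsymm : ∀ (m : Fin n) (g : G) (k : Fin n),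
        Submodule.map (ρ g) (Submodule.span K {Pi.single m (1 : K)}) =
          Submodule.span K {Pi.single k (1 : K)} → k ∈ S → m ∈ S := by
      intro m g k hk hkS
      refine hclosed k hkS g⁻¹ m ?_
      rw [← hk, ← Submodule.map_comp, ← Module.End.mul_eq_comp, ← map_mul, inv_mul_cancel,
        map_one, Module.End.one_eq_id, Submodule.map_id]
    refine ⟨{ carrier := {x | ∀ m ∉ S, x m = 0}
              add_mem' := fun {x y} hx hy m hm => by
                rw [Pi.add_apply, hx m hm, hy m hm, add_zero]
              zero_mem' := fun m _ => rfl
              smul_mem' := fun c x hx m hm => by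
                rw [Pi.smul_apply, hx m hm, smul_zero] },
           { carrier := {x | ∀ m ∈ S, x m = 0}
             add_mem' := fun {x y} hx hy m hm => by
               rw [Pi.add_apply, hx m hm, hy m hm, add_zero]
             zero_mem' := fun m _ => rfl
             smul_mem' := fun c x hx m hm => by
               rw [Pi.smul_apply, hx m hm, smul_zero] },
           ?_, ?_, ?_, ?_, ?_⟩
    · -- p invariant
      intro g x hx m' hm'
      show ρ g x m' = 0
      rw [map_apply_coord]
      refine Finset.sum_eq_zero fun m _ => ?_
      by_cases hxm : x m = 0
      · rw [hxm, zero_mul]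
      · have hmS : m ∈ S := by by_contra hmS; exact hxm (hx m hmS)
        obtain ⟨j', c, hc, hmon⟩ := rep_monomial hzsf ρ g m
        have hj'S : j' ∈ S := hclosed m hmS g j' (map_span_of_monomial ρ g hc hmon)
        rw [hmon, Pi.smul_apply, Pi.single_apply, smul_eq_mul,
          if_neg (fun h : m' = j' => hm' (h ▸ hj'S)), mul_zero, mul_zero]
    · -- q invariant
      intro g x hx m' hm'
      show ρ g x m' = 0
      rw [map_apply_coord]
      refine Finset.sum_eq_zero fun m _ => ?_
      by_cases hxm : x m = 0
      · rw [hxm, zero_mul]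
      · have hmS : m ∉ S := fun hmS => hxm (hx m hmS)
        obtain ⟨j', c, hc, hmon⟩ := rep_monomial hzsf ρ g m
        have hmap := map_span_of_monomial ρ g hc hmon
        rw [hmon, Pi.smul_apply, Pi.single_apply, smul_eq_mul,
          if_neg (fun h : m' = j' => hmS (hsymm m g j' hmap (h ▸ hm'))), mul_zero, mul_zero]
    · -- p ≠ ⊥
      refine (Submodule.ne_bot_iff _).mpr ⟨Pi.single i 1, ?_, single_one_ne_zero i⟩
      intro m hm
      exact Pi.single_eq_of_ne (fun h : m = i => hm (h ▸ hiS)) 1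
    · -- q ≠ ⊥
      refine (Submodule.ne_bot_iff _).mpr ⟨Pi.single j 1, ?_, single_one_ne_zero j⟩
      intro m hm
      exact Pi.single_eq_of_ne (fun h : m = j => hjS (h ▸ hm)) 1
    · -- unique decomposition
      intro z
      refine ⟨(⟨fun m => if m ∈ S then z m else 0, fun m hm => if_neg hm⟩,
               ⟨fun m => if m ∈ S then 0 else z m, fun m hm => if_pos hm⟩), ?_, ?_⟩
      · funext m
        by_cases hm : m ∈ S <;> simp [hm]
      · rintro ⟨⟨u, hu'⟩, ⟨v, hv'⟩⟩ huv
        have h1 : ∀ m, u m + v m = z m := fun m => congrFun huv m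
        have hucomp : u = fun m => if m ∈ S then z m else 0 := by
          funext m
          by_cases hm : m ∈ S
          · rw [if_pos hm, ← h1 m, hv' m hm, add_zero]
          · rw [if_neg hm, hu' m hm]
        have hvcomp : v = fun m => if m ∈ S then 0 else z m := by
          funext m
          by_cases hm : m ∈ S
          · rw [if_pos hm, hv' m hm]
          · rw [if_neg hm, ← h1 m, hu' m hm, zero_add]
        exact Prod.ext (Subtype.ext hucomp) (Subtype.ext hvcomp)
  · -- transitive → indecomposable
    rintro hT ⟨p, q, hp, hq, hp0, hq0, hu⟩
    have dichotomy : ∀ i : Fin n, (Pi.single i (1:K) : Fin n → K) ∈ p ∨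
        (Pi.single i (1:K) : Fin n → K) ∈ q := by
      intro i
      obtain ⟨⟨⟨u, hup⟩, ⟨v, hvq⟩⟩, huv, -⟩ := hu (Pi.single i 1)
      have hcoord : ∀ k, u k + v k = (Pi.single i (1:K) : Fin n → K) k :=
        fun k => congrFun huv k
      by_cases hui : u i = 0
      · right
        have hu0 : u = 0 := by
          funext k
          rcases eq_or_ne k i with rfl | hk
          · exact hui
          · have hk0 := hcoord k
            rw [Pi.single_eq_of_ne hk] at hk0
            exact (hzsf _ _ hk0).1
        have hv : v = Pi.single i 1 := by
          funext k
          have hk0 := hcoord k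
          have hu0k : u k = 0 := by rw [hu0]; rfl
          rw [hu0k, zero_add] at hk0
          exact hk0
        rwa [← hv]
      · left
        have hcoe : (Pi.single i (1:K) : Fin n → K) = (u i)⁻¹ • u := by
          funext k
          rw [Pi.smul_apply, smul_eq_mul, Pi.single_apply]
          rcases eq_or_ne k i with rfl | hk
          · rw [if_pos rfl, inv_mul_cancel₀ hui]
          · have hk0 := hcoord k
            rw [Pi.single_eq_of_ne hk] at hk0
            rw [if_neg hk, (hzsf _ _ hk0).1, mul_zero]
        rw [hcoe]
        exact p.smul_mem _ hup
    have notboth : ∀ i : Fin n, ¬ ((Pi.single i (1:K) : Fin n → K) ∈ p ∧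
        (Pi.single i (1:K) : Fin n → K) ∈ q) := by
      rintro i ⟨h1, h2⟩
      obtain ⟨w, -, hwu⟩ := hu (Pi.single i 1)
      have ha := hwu (⟨Pi.single i 1, h1⟩, ⟨0, q.zero_mem⟩) (by simp)
      have hb := hwu (⟨0, p.zero_mem⟩, ⟨Pi.single i 1, h2⟩) (by simp)
      have hc := congrArg (fun w => ((w.1 : p) : Fin n → K)) (ha.trans hb.symm)
      exact single_one_ne_zero i hc
    -- there is a basis vector in p
    obtain ⟨x, hxp, hx0⟩ := (Submodule.ne_bot_iff p).mp hp0
    obtain ⟨i, hxi⟩ : ∃ i, x i ≠ 0 := by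
      by_contra h
      push_neg at h
      exact hx0 (funext h)
    have hip : (Pi.single i (1:K) : Fin n → K) ∈ p := by
      set uf : Fin n → K :=
        fun m => if (Pi.single m (1:K) : Fin n → K) ∈ p then x m else 0 with hufdef
      set vf : Fin n → K :=
        fun m => if (Pi.single m (1:K) : Fin n → K) ∈ p then 0 else x m with hvfdef
      have hufp : uf ∈ p := by
        rw [pi_eq_sum uf]
        refine Submodule.sum_mem p fun m _ => ?_
        by_cases hm : (Pi.single m (1:K) : Fin n → K) ∈ p
        · exact p.smul_mem _ hm
        · have h0 : uf m = 0 := by simp [hufdef, hm]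
          rw [h0, zero_smul]
          exact p.zero_mem
      have hvfq : vf ∈ q := by
        rw [pi_eq_sum vf]
        refine Submodule.sum_mem q fun m _ => ?_
        by_cases hm : (Pi.single m (1:K) : Fin n → K) ∈ p
        · have h0 : vf m = 0 := by simp [hvfdef, hm]
          rw [h0, zero_smul]
          exact q.zero_mem
        · exact q.smul_mem _ ((dichotomy m).resolve_left hm)
      have hsum : uf + vf = x := by
        funext m
        by_cases hm : (Pi.single m (1:K) : Fin n → K) ∈ p <;>
          simp [hufdef, hvfdef, hm]
      obtain ⟨w, -, hwu⟩ := hu x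
      have ha := hwu (⟨uf, hufp⟩, ⟨vf, hvfq⟩) hsum
      have hb := hwu (⟨x, hxp⟩, ⟨0, q.zero_mem⟩) (by simp)
      have hv0 : vf = 0 := congrArg (fun w => ((w.2 : q) : Fin n → K)) (ha.trans hb.symm)
      by_contra hip
      have h0 : vf i = 0 := by rw [hv0]; rfl
      rw [hvfdef] at h0
      simp only [if_neg hip] at h0
      exact hxi h0
    -- there is a basis vector in q
    obtain ⟨y, hyq, hy0⟩ := (Submodule.ne_bot_iff q).mp hq0
    obtain ⟨j, hyj⟩ : ∃ j, y j ≠ 0 := by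
      by_contra h
      push_neg at h
      exact hy0 (funext h)
    have hjq : (Pi.single j (1:K) : Fin n → K) ∈ q := by
      set uf : Fin n → K :=
        fun m => if (Pi.single m (1:K) : Fin n → K) ∈ p then y m else 0 with hufdef
      set vf : Fin n → K :=
        fun m => if (Pi.single m (1:K) : Fin n → K) ∈ p then 0 else y m with hvfdef
      have hufp : uf ∈ p := by
        rw [pi_eq_sum uf]
        refine Submodule.sum_mem p fun m _ => ?_
        by_cases hm : (Pi.single m (1:K) : Fin n → K) ∈ p
        · exact p.smul_mem _ hm
        · have h0 : uf m = 0 := by simp [hufdef, hm]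
          rw [h0, zero_smul]
          exact p.zero_mem
      have hvfq : vf ∈ q := by
        rw [pi_eq_sum vf]
        refine Submodule.sum_mem q fun m _ => ?_
        by_cases hm : (Pi.single m (1:K) : Fin n → K) ∈ p
        · have h0 : vf m = 0 := by simp [hvfdef, hm]
          rw [h0, zero_smul]
          exact q.zero_mem
        · exact q.smul_mem _ ((dichotomy m).resolve_left hm)
      have hsum : uf + vf = y := by
        funext m
        by_cases hm : (Pi.single m (1:K) : Fin n → K) ∈ p <;>
          simp [hufdef, hvfdef, hm]
      obtain ⟨w, -, hwu⟩ := hu y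
      have ha := hwu (⟨uf, hufp⟩, ⟨vf, hvfq⟩) hsum
      have hb := hwu (⟨0, p.zero_mem⟩, ⟨y, hyq⟩) (by simp)
      have hu0 : uf = 0 := congrArg (fun w => ((w.1 : p) : Fin n → K)) (ha.trans hb.symm)
      have hjp : (Pi.single j (1:K) : Fin n → K) ∉ p := by
        intro hjp
        have h0 : uf j = 0 := by rw [hu0]; rfl
        rw [hufdef] at h0
        simp only [if_pos hjp] at h0
        exact hyj h0
      exact (dichotomy j).resolve_left hjp
    -- transport e i into q's line
    obtain ⟨g, hg⟩ := hT i j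
    obtain ⟨c, hc, hmon⟩ := monomial_of_map_span ρ g hg
    have h1 : ρ g (Pi.single i 1) ∈ p := hp g _ hip
    rw [hmon] at h1
    have h2 : (Pi.single j (1:K) : Fin n → K) ∈ p := by
      have h3 := p.smul_mem c⁻¹ h1
      rwa [smul_smul, inv_mul_cancel₀ hc, one_smul] at h3
    exact notboth j ⟨h2, hjq⟩
end

section
/- Let K be a connected zero-sum-free semiring and V a finitely generated free K-module. Any K-module automorphism f of V induces a permutation σ_f of the set of basis lines of V, sending span(v) to span(f(v)) for each basis vector v, and the assignment f ↦ σ_f is a group homomorphism: σ_{fg} = σ_f ∘ σ_g. -/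
open Submodule Finset

section Aux

variable {K : Type*} [CommSemiring K] {n : ℕ}

private lemma zsf_term (hzsf : ∀ a b : K, a + b = 0 → a = 0 ∧ b = 0)
    {g : Fin n → K} (h : ∑ m, g m = 0) (m : Fin n) : g m = 0 :=
  (hzsf _ _ ((Finset.add_sum_erase Finset.univ g (Finset.mem_univ m)).trans h)).1

private lemma span_single_inj (h1 : (1 : K) ≠ 0) {j k : Fin n}
    (h : span K {(Pi.single j 1 : Fin n → K)} = span K {(Pi.single k 1 : Fin n → K)}) :
    j = k := by
  by_contra hjk
  have hmem : (Pi.single j 1 : Fin n → K) ∈ span K {(Pi.single k 1 : Fin n → K)} := by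
    rw [← h]; exact subset_span rfl
  obtain ⟨c, hc⟩ := Submodule.mem_span_singleton.mp hmem
  have := congrFun hc j
  simp [Pi.single_apply, hjk] at this
  exact h1 this.symm

private lemma key_column (hzsf : ∀ a b : K, a + b = 0 → a = 0 ∧ b = 0)
    (hconn : ∀ e f : K, e + f = 1 → e * f = 0 → e = 0 ∨ e = 1)
    (h1 : (1 : K) ≠ 0)
    (f : (Fin n → K) ≃ₗ[K] (Fin n → K)) (i : Fin n) :
    ∃ j, span K {(f (Pi.single i 1) : Fin n → K)} = span K {(Pi.single j 1 : Fin n → K)} := by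
  classical
  set a : Fin n → Fin n → K := fun j k => f (Pi.single k 1) j with ha
  set b : Fin n → Fin n → K := fun j k => f.symm (Pi.single k 1) j with hb
  have hx : ∀ x : Fin n → K, x = ∑ k, x k • (Pi.single k 1 : Fin n → K) := by
    intro x; funext j
    simp [Finset.sum_apply, Pi.single_apply]
  -- (A * B) entries
  have hABfull : ∀ j k, (∑ m, a j m * b m k) = (Pi.single k 1 : Fin n → K) j := by
    intro j k
    have h2 : f (f.symm (Pi.single k 1)) = ∑ m, b m k • f (Pi.single m 1) := by
      conv_lhs => rw [hx (f.symm (Pi.single k 1))]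
      rw [map_sum]
      simp [map_smul, hb]
    have h3 := congrFun h2 j
    rw [f.apply_symm_apply] at h3
    rw [h3, Finset.sum_apply]
    simp [mul_comm, ha, hb]
  -- (B * A) entries
  have hBAfull : ∀ j k, (∑ m, b j m * a m k) = (Pi.single k 1 : Fin n → K) j := by
    intro j k
    have h2 : f.symm (f (Pi.single k 1)) = ∑ m, a m k • f.symm (Pi.single m 1) := by
      conv_lhs => rw [hx (f (Pi.single k 1))]
      rw [map_sum]
      simp [map_smul, ha]
    have h3 := congrFun h2 j
    rw [f.symm_apply_apply] at h3
    rw [h3, Finset.sum_apply]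
    simp [mul_comm, ha, hb]
  -- off-diagonal termwise vanishing of A*B
  have hAB0 : ∀ j k, j ≠ k → ∀ m, a j m * b m k = 0 := by
    intro j k hjk m
    have h0 : (∑ m, a j m * b m k) = 0 := by
      rw [hABfull j k]; simp [Pi.single_apply, hjk]
    exact zsf_term hzsf h0 m
  set e : Fin n → K := fun m => b i m * a m i with he
  have he1 : ∑ m, e m = 1 := by
    have := hBAfull i i; simpa using this
  have heorth : ∀ j k, j ≠ k → e j * e k = 0 := by
    intro j k hjk
    have hterm : a j i * b i k = 0 := hAB0 j k hjk i
    have : e j * e k = (b i j * a k i) * (a j i * b i k) := by simp only [he]; ring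
    rw [this, hterm, mul_zero]
  have hidem : ∀ j, e j = 0 ∨ e j = 1 := by
    intro j
    refine hconn (e j) (∑ k ∈ Finset.univ.erase j, e k) ?_ ?_
    · rw [Finset.add_sum_erase Finset.univ e (Finset.mem_univ j), he1]
    · rw [Finset.mul_sum]
      refine Finset.sum_eq_zero fun k hk => heorth j k ?_
      exact fun h => (Finset.mem_erase.mp hk).1 h.symm
  have hex : ∃ j, e j = 1 := by
    by_contra hne
    push_neg at hne
    have : ∀ j ∈ Finset.univ, e j = 0 := fun j _ => (hidem j).resolve_right (hne j)
    exact h1 (he1.symm.trans (Finset.sum_eq_zero this))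
  obtain ⟨j₀, hj₀⟩ := hex
  have hzero : ∀ j, j ≠ j₀ → a j i = 0 := by
    intro j hj
    have hej : e j = 0 := by
      rcases hidem j with h | h
      · exact h
      · exfalso
        have := heorth j j₀ hj
        rw [h, hj₀, mul_one] at this
        exact h1 this
    have hsum : a j i = ∑ k, a j i * e k := by
      rw [← Finset.mul_sum, he1, mul_one]
    rw [hsum, Finset.sum_eq_single j]
    · rw [hej, mul_zero]
    · intro k _ hk
      have hterm : a j i * b i k = 0 := hAB0 j k (fun h => hk h.symm) i
      have : a j i * e k = (a j i * b i k) * a k i := by simp only [he]; ring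
      rw [this, hterm, zero_mul]
    · intro h; exact absurd (Finset.mem_univ j) h
  have hcol : f (Pi.single i 1) = a j₀ i • (Pi.single j₀ 1 : Fin n → K) := by
    funext j
    by_cases hj : j = j₀
    · subst hj; simp [ha, Pi.single_apply]
    · rw [show f (Pi.single i 1) j = a j i from rfl, hzero j hj]
      simp [Pi.single_apply, hj]
  have hu : IsUnit (a j₀ i) :=
    IsUnit.of_mul_eq_one (b i j₀) (by rw [mul_comm]; exact hj₀)
  exact ⟨j₀, by rw [hcol, Submodule.span_singleton_smul_eq hu]⟩

end Aux

/-- Over a connected zero-sum-free semiring `K`, every module automorphism of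
a finitely generated free module permutes the set of basis lines, and the
assignment `f ↦ σ_f` is a group homomorphism. -/
theorem automorphism_permutes_basis_lines
    (K : Type*) [CommSemiring K]
    (hzsf : ∀ a b : K, a + b = 0 → a = 0 ∧ b = 0)
    (hconn : ∀ e f : K, e + f = 1 → e * f = 0 → e = 0 ∨ e = 1)
    (n : ℕ) :
    ∃ σ : ((Fin n → K) ≃ₗ[K] (Fin n → K)) →* Equiv.Perm (Fin n),
      ∀ (f : (Fin n → K) ≃ₗ[K] (Fin n → K)) (i : Fin n),
        Submodule.map (f : (Fin n → K) →ₗ[K] (Fin n → K))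
            (Submodule.span K {Pi.single i (1 : K)}) =
          Submodule.span K {Pi.single (σ f i) (1 : K)} := by
  by_cases h1 : (1 : K) = 0
  · refine ⟨1, fun f i => ?_⟩
    have hz : ∀ j : Fin n, (Pi.single j (1 : K) : Fin n → K) = 0 := by
      intro j; rw [h1]; simp
    rw [hz, hz, Submodule.span_zero_singleton, Submodule.map_bot]
  · -- main case
    choose τ hτ using fun f i => key_column hzsf hconn h1 f i
    have hmap : ∀ (f : (Fin n → K) ≃ₗ[K] (Fin n → K)) (v : Fin n → K),
        Submodule.map (f : (Fin n → K) →ₗ[K] (Fin n → K)) (span K {v}) = span K {f v} := by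
      intro f v
      rw [Submodule.map_span, Set.image_singleton]
      rfl
    have hmul : ∀ f g i, τ (f * g) i = τ f (τ g i) := by
      intro f g i
      apply span_single_inj h1
      rw [← hτ (f * g) i]
      have h2 : (f * g) (Pi.single i 1) = f (g (Pi.single i 1)) := rfl
      rw [h2]
      calc span K {f (g (Pi.single i 1))}
          = Submodule.map (f : (Fin n → K) →ₗ[K] (Fin n → K)) (span K {g (Pi.single i 1)}) :=
            (hmap f _).symm
        _ = Submodule.map (f : (Fin n → K) →ₗ[K] (Fin n → K))
              (span K {(Pi.single (τ g i) 1 : Fin n → K)}) := by rw [hτ g i]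
        _ = span K {f (Pi.single (τ g i) 1)} := hmap f _
        _ = span K {(Pi.single (τ f (τ g i)) 1 : Fin n → K)} := hτ f _
    have hone : ∀ i, τ 1 i = i := by
      intro i
      apply span_single_inj h1
      rw [← hτ 1 i]
      rfl
    refine ⟨MonoidHom.mk' (fun f => ⟨τ f, τ f⁻¹,
        fun i => by rw [← hmul f⁻¹ f, inv_mul_cancel, hone],
        fun i => by rw [← hmul f f⁻¹, mul_inv_cancel, hone]⟩)
        (fun f g => Equiv.ext fun i => hmul f g i), fun f i => ?_⟩
    rw [hmap f _]
    exact hτ f i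
end

section
/- Let G be a finite group, K an idempotent semifield, and V an indecomposable representation of G over K with H ≤ G the stabilizer of a basis line span(v). Then H acts trivially on v (hv = v for all h ∈ H), and every element of V can be written uniquely as Σ_{g ∈ S} a_g (g·v), where S ⊆ G is a set of left coset representatives of H and a_g ∈ K. Equivalently, every element can be written uniquely as Σ_{g ∈ G} a_g (g·v) with coefficients constant on left cosets of H. -/
section AuxIdem
variable {K : Type*} [Semifield K]

lemma aux_zsf (hidem : ∀ a : K, a + a = a) (a b : K) (h : a + b = 0) : a = 0 := by
  have h2 : a + (a + b) = a + 0 := by rw [h]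
  rw [← add_assoc, hidem, add_zero] at h2
  exact h2.symm.trans h

lemma aux_sum_zero (hidem : ∀ a : K, a + a = a) {α : Type*} {s : Finset α} {f : α → K}
    (h : ∑ i ∈ s, f i = 0) {i : α} (hi : i ∈ s) : f i = 0 := by
  classical
  rw [← Finset.add_sum_erase _ _ hi] at h
  exact aux_zsf hidem _ _ h

lemma aux_nsmul (hidem : ∀ a : K, a + a = a) (b : K) : ∀ m : ℕ, 0 < m → m • b = b := by
  intro m
  induction m with
  | zero => intro h; exact absurd h (lt_irrefl 0)
  | succ m ih =>
    intro _
    rcases Nat.eq_zero_or_pos m with hm | hm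
    · subst hm; simp
    · rw [succ_nsmul, ih hm, hidem]

lemma aux_sum_const (hidem : ∀ a : K, a + a = a) {α : Type*} {s : Finset α}
    (hs : s.Nonempty) (b : K) : ∑ _i ∈ s, b = b := by
  rw [Finset.sum_const]
  exact aux_nsmul hidem b _ (Finset.card_pos.mpr hs)

lemma aux_torsion (hidem : ∀ a : K, a + a = a) (c : K) (m : ℕ) (hm : 0 < m)
    (h : c ^ m = 1) : c = 1 := by
  obtain ⟨m', rfl⟩ : ∃ m', m = m' + 1 := ⟨m - 1, (Nat.succ_pred_eq_of_pos hm).symm⟩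
  set s : K := ∑ i ∈ Finset.range (m' + 1), c ^ i with hs
  have hcs : c * s = s := by
    rw [hs, Finset.mul_sum]
    have h1 : ∀ i ∈ Finset.range (m' + 1), c * c ^ i = c ^ (i + 1) := by
      intro i _; rw [pow_succ, mul_comm]
    rw [Finset.sum_congr rfl h1, Finset.sum_range_succ (fun i => c ^ (i + 1)) m', h,
      Finset.sum_range_succ' (fun i => c ^ i) m']
    simp
  have hsne : s ≠ 0 := by
    intro h0
    have : c ^ 0 = 0 := aux_sum_zero hidem (hs ▸ h0) (Finset.mem_range.mpr (Nat.succ_pos m'))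
    simp at this
  calc c = c * (s * s⁻¹) := by rw [mul_inv_cancel₀ hsne, mul_one]
    _ = (c * s) * s⁻¹ := by ring
    _ = 1 := by rw [hcs, mul_inv_cancel₀ hsne]

end AuxIdem

/-- Let `V = K^n` be an indecomposable representation of a finite group `G`
over an idempotent semifield `K`, and let `H` be the stabilizer of the basis
line spanned by the basis vector `v = e_{i₀}`.  Then `H` fixes `v`, and every
element of `V` is uniquely of the form `∑_{g ∈ G} a_g (g • v)` with the
coefficients `a : G → K` constant on left cosets of `H` (equivalently,
uniquely `∑_{g ∈ S} a_g (g • v)` over coset representatives `S`). -/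
theorem indecomposable_unique_coset_expansion
    (K G : Type*) [Semifield K] (hidem : ∀ a : K, a + a = a)
    [Group G] [Fintype G] (n : ℕ) (ρ : Representation K G (Fin n → K))
    (hindec : ¬ ∃ p q : Submodule K (Fin n → K),
        (∀ g : G, ∀ y ∈ p, ρ g y ∈ p) ∧ (∀ g : G, ∀ y ∈ q, ρ g y ∈ q) ∧
        p ≠ ⊥ ∧ q ≠ ⊥ ∧
        ∀ z : Fin n → K, ∃! w : p × q, (w.1 : Fin n → K) + (w.2 : Fin n → K) = z)
    (i₀ : Fin n) (H : Subgroup G)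
    (hH : ∀ g : G, g ∈ H ↔
        Submodule.map (ρ g) (Submodule.span K {Pi.single i₀ (1 : K)}) =
          Submodule.span K {Pi.single i₀ (1 : K)}) :
    (∀ h ∈ H, ρ h (Pi.single i₀ (1 : K)) = Pi.single i₀ (1 : K)) ∧
    (∀ x : Fin n → K, ∃! a : G → K,
        (∀ g : G, ∀ h ∈ H, a (g * h) = a g) ∧
        x = ∑ g : G, a g • ρ g (Pi.single i₀ (1 : K))) := by
  classical
  set v : Fin n → K := Pi.single i₀ (1 : K) with hv
  set A : G → Fin n → Fin n → K := fun g j k => ρ g (Pi.single k 1) j with hA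
  have happly : ∀ (g : G) (x : Fin n → K) (j : Fin n), ρ g x j = ∑ k, A g j k * x k := by
    intro g x j
    have hx : x = ∑ k, (x k : K) • (Pi.single k (1 : K) : Fin n → K) := by
      funext l
      rw [Finset.sum_apply]
      simp [Pi.single_apply, mul_comm]
    conv_lhs => rw [hx]
    rw [map_sum, Finset.sum_apply]
    refine Finset.sum_congr rfl fun k _ => ?_
    rw [map_smul]
    simp [hA, mul_comm]
  have hcomp0 : ∀ (g g' : G) (x : Fin n → K), ρ g (ρ g' x) = ρ (g * g') x := by
    intro g g' x
    rw [map_mul, Module.End.mul_apply]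
  have horth : ∀ (g : G) (j l : Fin n),
      ∑ k, A g j k * A g⁻¹ k l = if j = l then 1 else 0 := by
    intro g j l
    have h1 : ρ g (ρ g⁻¹ (Pi.single l 1)) = Pi.single l (1 : K) := by
      rw [hcomp0, mul_inv_cancel, map_one, Module.End.one_apply]
    have h2 := congrFun h1 j
    rw [happly g _ j] at h2
    rw [h2, Pi.single_apply]
  have hcol : ∀ (g : G) (k : Fin n), ∃ j, A g j k ≠ 0 ∧ ∀ j', j' ≠ j → A g j' k = 0 := by
    intro g k
    have hdiag : ∑ l, A g⁻¹ k l * A g l k = 1 := by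
      have := horth g⁻¹ k k
      rw [if_pos rfl, inv_inv] at this
      exact this
    have hex : ∃ j, A g j k ≠ 0 := by
      by_contra hno
      push_neg at hno
      have h0 : ∑ l, A g⁻¹ k l * A g l k = 0 :=
        Finset.sum_eq_zero fun l _ => by rw [hno l, mul_zero]
      exact one_ne_zero (hdiag.symm.trans h0)
    obtain ⟨j, hj⟩ := hex
    refine ⟨j, hj, fun j' hj' => ?_⟩
    by_contra hj'ne
    have hrow : ∀ l, A g⁻¹ k l = 0 := by
      intro l
      by_cases hlj : l = j
      · subst hlj
        have := horth g j' l
        rw [if_neg (by exact hj')] at this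
        have hterm := aux_sum_zero hidem this (Finset.mem_univ k)
        rcases mul_eq_zero.mp hterm with h | h
        · exact absurd h hj'ne
        · exact h
      · have := horth g j l
        rw [if_neg (fun h => hlj h.symm)] at this
        have hterm := aux_sum_zero hidem this (Finset.mem_univ k)
        rcases mul_eq_zero.mp hterm with h | h
        · exact absurd h hj
        · exact h
    have h0 : ∑ l, A g⁻¹ k l * A g l k = 0 :=
      Finset.sum_eq_zero fun l _ => by rw [hrow l, zero_mul]
    exact one_ne_zero (hdiag.symm.trans h0)
  choose σ hσne hσ0 using hcol
  have hPi : ∀ (j j' : Fin n) (b b' : K), b ≠ 0 →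
      (Pi.single j b : Fin n → K) = Pi.single j' b' → j = j' ∧ b = b' := by
    intro j j' b b' hb heq
    have h1 := congrFun heq j
    rw [Pi.single_eq_same, Pi.single_apply] at h1
    by_cases hjj : j = j'
    · subst hjj
      rw [if_pos rfl] at h1
      exact ⟨rfl, h1⟩
    · rw [if_neg hjj] at h1
      exact absurd h1 hb
  have hsingle : ∀ (g : G) (k : Fin n),
      ρ g (Pi.single k (1 : K)) = Pi.single (σ g k) (A g (σ g k) k) := by
    intro g k
    funext j
    rw [Pi.single_apply]
    by_cases hj : j = σ g k
    · subst hj; rw [if_pos rfl]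
    · rw [if_neg hj]
      exact hσ0 g k j hj
  have hsmul : ∀ (j : Fin n) (b c : K),
      b • (Pi.single j c : Fin n → K) = Pi.single j (b * c) := by
    intro j b c
    funext l
    rw [Pi.smul_apply, Pi.single_apply, Pi.single_apply, smul_eq_mul]
    by_cases hl : l = j
    · rw [if_pos hl, if_pos hl]
    · rw [if_neg hl, if_neg hl, mul_zero]
  have hsingle' : ∀ (g : G) (k : Fin n) (b : K),
      ρ g (Pi.single k b) = Pi.single (σ g k) (A g (σ g k) k * b) := by
    intro g k b
    have hb : (Pi.single k b : Fin n → K) = b • (Pi.single k (1 : K) : Fin n → K) := by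
      rw [hsmul, mul_one]
    rw [hb, map_smul, hsingle, hsmul, mul_comm]
  have hid : ∀ k : Fin n, σ (1 : G) k = k := by
    intro k
    have h1 : ρ (1 : G) (Pi.single k (1:K)) = Pi.single k (1 : K) := by
      rw [map_one, Module.End.one_apply]
    rw [hsingle] at h1
    exact (hPi _ _ _ _ (hσne 1 k) h1).1
  have hcomp : ∀ (g g' : G) (k : Fin n), σ g (σ g' k) = σ (g * g') k := by
    intro g g' k
    have h1 : ρ g (ρ g' (Pi.single k (1:K))) = ρ (g * g') (Pi.single k (1:K)) := hcomp0 _ _ _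
    rw [hsingle g', hsingle' g, hsingle (g * g')] at h1
    exact (hPi _ _ _ _ (by exact mul_ne_zero (hσne g _) (hσne g' _)) h1).1
  have hinv : ∀ (g : G) (k : Fin n), σ g⁻¹ (σ g k) = k := by
    intro g k
    rw [hcomp, inv_mul_cancel, hid]
  have hHiff : ∀ g : G, g ∈ H ↔ σ g i₀ = i₀ := by
    intro g
    rw [hH]
    constructor
    · intro hmap
      have hvmem : v ∈ Submodule.map (ρ g) (Submodule.span K {v}) := by
        rw [hmap]
        exact Submodule.mem_span_singleton_self v
      obtain ⟨y, hy, hyv⟩ := hvmem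
      obtain ⟨b, rfl⟩ := Submodule.mem_span_singleton.mp hy
      rw [map_smul, hv, hsingle, hsmul] at hyv
      exact ((hPi _ _ _ _ one_ne_zero hyv.symm).1).symm
    · intro hσi
      have hcne : A g i₀ i₀ ≠ 0 := by
        have := hσne g i₀; rwa [hσi] at this
      have him : ρ g v = Pi.single i₀ (A g i₀ i₀) := by
        rw [hv, hsingle, hσi]
      rw [Submodule.map_span, Set.image_singleton]
      apply le_antisymm
      · rw [Submodule.span_le, Set.singleton_subset_iff]
        refine Submodule.mem_span_singleton.mpr ⟨A g i₀ i₀, ?_⟩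
        rw [hv, hsmul, mul_one, ← hv, him]
      · rw [Submodule.span_le, Set.singleton_subset_iff]
        refine Submodule.mem_span_singleton.mpr ⟨(A g i₀ i₀)⁻¹, ?_⟩
        rw [him, hsmul, inv_mul_cancel₀ hcne, hv]
  have hfix : ∀ h ∈ H, ρ h v = v := by
    intro h hh
    have hσi : σ h i₀ = i₀ := (hHiff h).mp hh
    set c : K := A h i₀ i₀ with hc
    have hcv : ρ h v = c • v := by
      rw [hv, hsingle, hσi, hsmul, mul_one]
    have hpow : ∀ m : ℕ, ρ (h ^ m) v = c ^ m • v := by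
      intro m
      induction m with
      | zero => rw [pow_zero, pow_zero, map_one, Module.End.one_apply, one_smul]
      | succ m ih =>
        rw [pow_succ, pow_succ, ← hcomp0, hcv, map_smul, ih, smul_smul,
          mul_comm c (c ^ m)]
    have hcard : ρ (h ^ Fintype.card G) v = v := by
      rw [pow_card_eq_one, map_one, Module.End.one_apply]
    have hcm : c ^ Fintype.card G = 1 := by
      have h3 := (hpow (Fintype.card G)).symm.trans hcard
      have h2 := congrFun h3 i₀
      rw [Pi.smul_apply, hv, Pi.single_eq_same, smul_eq_mul, mul_one] at h2
      exact h2
    have hc1 : c = 1 := aux_torsion hidem c _ Fintype.card_pos hcm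
    rw [hcv, hc1, one_smul]
  refine ⟨hfix, ?_⟩
  have htrans : ∀ i : Fin n, ∃ g : G, σ g i₀ = i := by
    by_contra hno
    push_neg at hno
    obtain ⟨i₁, hi₁⟩ := hno
    set O : Set (Fin n) := {i | ∃ g : G, σ g i₀ = i} with hO
    have hOcl : ∀ (g : G) (k : Fin n), k ∈ O → σ g k ∈ O := by
      rintro g k ⟨g', rfl⟩
      exact ⟨g * g', (hcomp g g' i₀).symm⟩
    have hi₀O : i₀ ∈ O := ⟨1, hid i₀⟩
    let p : Submodule K (Fin n → K) :=
      { carrier := {x | ∀ j, j ∉ O → x j = 0}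
        add_mem' := by
          intro x y hx hy j hj
          rw [Pi.add_apply, hx j hj, hy j hj, add_zero]
        zero_mem' := by intro j hj; rfl
        smul_mem' := by
          intro b x hx j hj
          rw [Pi.smul_apply, hx j hj, smul_zero] }
    let q : Submodule K (Fin n → K) :=
      { carrier := {x | ∀ j, j ∈ O → x j = 0}
        add_mem' := by
          intro x y hx hy j hj
          rw [Pi.add_apply, hx j hj, hy j hj, add_zero]
        zero_mem' := by intro j hj; rfl
        smul_mem' := by
          intro b x hx j hj
          rw [Pi.smul_apply, hx j hj, smul_zero] }
    have hpmem : ∀ x : Fin n → K, x ∈ p ↔ ∀ j, j ∉ O → x j = 0 := fun x => Iff.rfl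
    have hqmem : ∀ x : Fin n → K, x ∈ q ↔ ∀ j, j ∈ O → x j = 0 := fun x => Iff.rfl
    refine hindec ⟨p, q, ?_, ?_, ?_, ?_, ?_⟩
    · intro g y hy
      rw [hpmem] at hy ⊢
      intro j hj
      rw [happly]
      refine Finset.sum_eq_zero fun k _ => ?_
      by_cases hk : k ∈ O
      · have hne : j ≠ σ g k := fun h => hj (h ▸ hOcl g k hk)
        rw [hσ0 g k j hne, zero_mul]
      · rw [hy k hk, mul_zero]
    · intro g y hy
      rw [hqmem] at hy ⊢
      intro j hj
      rw [happly]
      refine Finset.sum_eq_zero fun k _ => ?_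
      by_cases hk : k ∈ O
      · rw [hy k hk, mul_zero]
      · have hne : j ≠ σ g k := by
          intro h
          apply hk
          have h2 := hOcl g⁻¹ j hj
          rwa [h, hinv] at h2
        rw [hσ0 g k j hne, zero_mul]
    · rw [Submodule.ne_bot_iff]
      refine ⟨v, (hpmem v).mpr fun j hj => ?_, fun h0 => ?_⟩
      · have hne : j ≠ i₀ := fun h => hj (h ▸ hi₀O)
        rw [hv, Pi.single_apply, if_neg hne]
      · have := congrFun h0 i₀
        rw [hv] at this
        simp at this
    · rw [Submodule.ne_bot_iff]
      refine ⟨Pi.single i₁ (1 : K), (hqmem _).mpr fun j hj => ?_, fun h0 => ?_⟩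
      · have hne : j ≠ i₁ := by
          intro h
          obtain ⟨g, hg⟩ := hj
          exact hi₁ g (by rw [hg, h])
        rw [Pi.single_apply, if_neg hne]
      · have := congrFun h0 i₁
        simp at this
    · intro z
      refine ⟨(⟨fun j => if j ∈ O then z j else 0, (hpmem _).mpr fun j hj => if_neg hj⟩,
        ⟨fun j => if j ∈ O then 0 else z j, (hqmem _).mpr fun j hj => if_pos hj⟩), ?_, ?_⟩
      · funext j
        by_cases hj : j ∈ O
        · simp [hj]
        · simp [hj]
      · rintro ⟨⟨u1, hu1'⟩, ⟨u2, hu2'⟩⟩ heq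
        have hu1 := (hpmem u1).mp hu1'
        have hu2 := (hqmem u2).mp hu2'
        have heq' : u1 + u2 = z := heq
        refine Prod.ext (Subtype.ext ?_) (Subtype.ext ?_)
        · show u1 = fun j => if j ∈ O then z j else 0
          funext j
          by_cases hj : j ∈ O
          · have h2 := congrFun heq' j
            rw [Pi.add_apply, hu2 j hj, add_zero] at h2
            simp only [h2, if_pos hj]
          · rw [hu1 j hj]; simp [hj]
        · show u2 = fun j => if j ∈ O then 0 else z j
          funext j
          by_cases hj : j ∈ O
          · rw [hu2 j hj]; simp [hj]
          · have h2 := congrFun heq' j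
            rw [Pi.add_apply, hu1 j hj, zero_add] at h2
            simp only [h2, if_neg hj]
  -- Part 2
  intro x
  set jg : G → Fin n := fun g => σ g i₀ with hjg
  set cg : G → K := fun g => A g (σ g i₀) i₀ with hcg
  have hcgne : ∀ g, cg g ≠ 0 := fun g => hσne g i₀
  have hgv : ∀ g : G, ρ g v = Pi.single (jg g) (cg g) := fun g => by rw [hv, hsingle]
  have hcoset : ∀ (g : G), ∀ h ∈ H, jg (g * h) = jg g ∧ cg (g * h) = cg g := by
    intro g h hh
    have h1 : ρ (g * h) v = ρ g v := by rw [← hcomp0, hfix h hh]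
    rw [hgv, hgv] at h1
    exact hPi _ _ _ _ (hcgne _) h1
  have hterm : ∀ (aa : G → K) (g : G) (i : Fin n),
      (aa g • ρ g v) i = if jg g = i then aa g * cg g else 0 := by
    intro aa g i
    rw [hgv, hsmul, Pi.single_apply]
    by_cases h : i = jg g
    · subst h; rw [if_pos rfl]
    · rw [if_neg h, if_neg (fun hh => h hh.symm)]
  have hsumapp : ∀ (aa : G → K) (i : Fin n),
      (∑ g : G, aa g • ρ g v) i
        = ∑ g ∈ Finset.univ.filter (fun g => jg g = i), aa g * cg g := by
    intro aa i
    rw [Finset.sum_apply, Finset.sum_congr rfl (fun g _ => hterm aa g i)]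
    exact (Finset.sum_filter _ _).symm
  have hfilter_ne : ∀ i : Fin n, (Finset.univ.filter (fun g => jg g = i)).Nonempty := by
    intro i
    obtain ⟨g, hg⟩ := htrans i
    exact ⟨g, Finset.mem_filter.mpr ⟨Finset.mem_univ g, hg⟩⟩
  refine ⟨fun g => (cg g)⁻¹ * x (jg g), ⟨?_, ?_⟩, ?_⟩
  · intro g h hh
    show (cg (g * h))⁻¹ * x (jg (g * h)) = (cg g)⁻¹ * x (jg g)
    rw [(hcoset g h hh).1, (hcoset g h hh).2]
  · funext i
    rw [hsumapp]
    have h1 : ∀ g ∈ Finset.univ.filter (fun g => jg g = i),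
        ((cg g)⁻¹ * x (jg g)) * cg g = x i := by
      intro g hg
      obtain ⟨-, hgi⟩ := Finset.mem_filter.mp hg
      rw [hgi, mul_comm, ← mul_assoc, mul_inv_cancel₀ (hcgne g), one_mul]
    rw [Finset.sum_congr rfl h1, aux_sum_const hidem (hfilter_ne i)]
  · intro a' ⟨hc', hsum'⟩
    funext g₀
    show a' g₀ = (cg g₀)⁻¹ * x (jg g₀)
    have hkey : ∀ g, jg g = jg g₀ → a' g = a' g₀ ∧ cg g = cg g₀ := by
      intro g hg
      have hhH : g₀⁻¹ * g ∈ H := by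
        refine (hHiff _).mpr ?_
        have : σ (g₀⁻¹ * g) i₀ = σ g₀⁻¹ (σ g i₀) := (hcomp _ _ _).symm
        rw [this]
        show σ g₀⁻¹ (jg g) = i₀
        rw [hg]
        exact hinv g₀ i₀
      have hgeq : g = g₀ * (g₀⁻¹ * g) := by group
      constructor
      · rw [hgeq]; exact hc' g₀ _ hhH
      · rw [hgeq]; exact (hcoset g₀ _ hhH).2
    have hxi := congrFun hsum' (jg g₀)
    rw [hsumapp] at hxi
    have h1 : ∀ g ∈ Finset.univ.filter (fun g => jg g = jg g₀),
        a' g * cg g = a' g₀ * cg g₀ := by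
      intro g hg
      obtain ⟨-, hgi⟩ := Finset.mem_filter.mp hg
      rw [(hkey g hgi).1, (hkey g hgi).2]
    rw [Finset.sum_congr rfl h1, aux_sum_const hidem (hfilter_ne (jg g₀))] at hxi
    rw [hxi, mul_comm (a' g₀) (cg g₀), ← mul_assoc, inv_mul_cancel₀ (hcgne g₀), one_mul]
end

section
/- Let G be a finite group, K an idempotent semifield, V an indecomposable representation of G over K, and W any representation. Let H ≤ G be the stabilizer subgroup associated to V (the stabilizer of a basis line). Then there is a bijection between homomorphisms of representations V → W and H-invariant elements of W (elements w ∈ W with h·w = w for all h ∈ H). -/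
section Aux
variable {K : Type*} [Semifield K]

private lemma idem_add_eq_zero (hidem : ∀ a : K, a + a = a) {a b : K} (h : a + b = 0) :
    a = 0 ∧ b = 0 := by
  constructor
  · calc a = a + 0 := (add_zero a).symm
    _ = a + (a + b) := by rw [h]
    _ = (a + a) + b := (add_assoc a a b).symm
    _ = a + b := by rw [hidem]
    _ = 0 := h
  · calc b = 0 + b := (zero_add b).symm
    _ = (a + b) + b := by rw [h]
    _ = a + (b + b) := add_assoc a b b
    _ = a + b := by rw [hidem]
    _ = 0 := h

private lemma idem_sum_eq_zero (hidem : ∀ a : K, a + a = a) {ι : Type*} {s : Finset ι}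
    {f : ι → K} (h : ∑ i ∈ s, f i = 0) : ∀ i ∈ s, f i = 0 := by
  classical
  induction s using Finset.induction_on with
  | empty => simp
  | insert a s' hx ih =>
    rw [Finset.sum_insert hx] at h
    obtain ⟨h1, h2⟩ := idem_add_eq_zero hidem h
    intro i hi
    rcases Finset.mem_insert.1 hi with rfl | hi
    · exact h1
    · exact ih h2 i hi

private lemma idem_pow_eq_one (hidem : ∀ a : K, a + a = a) {c : K} (hc : c ≠ 0) {k : ℕ}
    (hk : 0 < k) (h : c ^ k = 1) : c = 1 := by
  obtain ⟨j, rfl⟩ : ∃ j, k = j + 1 := ⟨k - 1, (Nat.succ_pred_eq_of_pos hk).symm⟩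
  set s : K := ∑ i ∈ Finset.range (j + 1), c ^ i with hs
  have hcs : c * s = s := by
    rw [hs, Finset.mul_sum]
    have l1 : ∑ i ∈ Finset.range (j + 1), c * c ^ i
        = ∑ i ∈ Finset.range (j + 1), c ^ (i + 1) := by
      refine Finset.sum_congr rfl fun i _ => ?_
      rw [pow_succ, mul_comm]
    rw [l1, Finset.sum_range_succ, Finset.sum_range_succ', h, pow_zero]
  have hsne : s ≠ 0 := by
    intro h0
    have := idem_sum_eq_zero hidem h0 0 (Finset.mem_range.2 (Nat.succ_pos j))
    rw [pow_zero] at this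
    exact one_ne_zero this
  calc c = c * s * s⁻¹ := by rw [mul_assoc, mul_inv_cancel₀ hsne, mul_one]
  _ = 1 := by rw [hcs, mul_inv_cancel₀ hsne]

private lemma single_eq_smul {n : ℕ} (i : Fin n) (c : K) :
    Pi.single i c = c • (Pi.single i 1 : Fin n → K) := by
  funext k
  simp [Pi.single_apply, Pi.smul_apply, smul_eq_mul, mul_ite, mul_one, mul_zero]

private lemma lin_apply {n : ℕ} {M : Type*} [AddCommMonoid M] [Module K M]
    (f : (Fin n → K) →ₗ[K] M) (x : Fin n → K) :
    f x = ∑ i, x i • f (Pi.single i 1) := by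
  conv_lhs => rw [← Finset.univ_sum_single x, map_sum]
  refine Finset.sum_congr rfl fun i _ => ?_
  rw [single_eq_smul, map_smul]

private lemma lin_ext {n : ℕ} {M : Type*} [AddCommMonoid M] [Module K M]
    {f g : (Fin n → K) →ₗ[K] M}
    (h : ∀ i, f (Pi.single i 1) = g (Pi.single i 1)) : f = g := by
  refine LinearMap.ext fun x => ?_
  rw [lin_apply f, lin_apply g]
  simp [h]

private lemma monomial (hidem : ∀ a : K, a + a = a) {n : ℕ}
    (f g : (Fin n → K) →ₗ[K] (Fin n → K))
    (hfg : ∀ x, f (g x) = x) (hgf : ∀ x, g (f x) = x) (j : Fin n) :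
    ∃ i c, c ≠ 0 ∧ f (Pi.single j 1) = Pi.single i c := by
  have factGF : ∀ k, ∑ i, f (Pi.single j 1) i * g (Pi.single i 1) k
      = if k = j then (1:K) else 0 := by
    intro k
    have h1 := congrFun (congrArg (fun y => (y : Fin n → K)) (hgf (Pi.single j 1))) k
    rw [lin_apply g (f (Pi.single j 1))] at h1
    simpa [Finset.sum_apply, Pi.single_apply, smul_eq_mul] using h1
  -- find i with both factors nonzero at k = j
  have h1 : ∑ i, f (Pi.single j 1) i * g (Pi.single i 1) j = 1 := by
    rw [factGF j, if_pos rfl]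
  have hex : ∃ i, f (Pi.single j 1) i ≠ 0 ∧ g (Pi.single i 1) j ≠ 0 := by
    by_contra hcon
    push_neg at hcon
    have : ∑ i, f (Pi.single j 1) i * g (Pi.single i 1) j = 0 := by
      refine Finset.sum_eq_zero fun i _ => ?_
      by_cases hfi : f (Pi.single j 1) i = 0
      · rw [hfi, zero_mul]
      · rw [hcon i hfi, mul_zero]
    rw [h1] at this; exact one_ne_zero this
  obtain ⟨i, hfi, hgi⟩ := hex
  -- column i of g is concentrated at j
  have hgcol : ∀ k, k ≠ j → g (Pi.single i 1) k = 0 := by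
    intro k hk
    have h2 : ∑ i', f (Pi.single j 1) i' * g (Pi.single i' 1) k = 0 := by
      rw [factGF k, if_neg hk]
    have := idem_sum_eq_zero hidem h2 i (Finset.mem_univ i)
    exact (mul_eq_zero.1 this).resolve_left hfi
  -- use f ∘ g = id
  have factFG : ∀ k, ∑ l, g (Pi.single i 1) l * f (Pi.single l 1) k
      = if k = i then (1:K) else 0 := by
    intro k
    have h1 := congrFun (congrArg (fun y => (y : Fin n → K)) (hfg (Pi.single i 1))) k
    rw [lin_apply f (g (Pi.single i 1))] at h1
    simpa [Finset.sum_apply, Pi.single_apply, smul_eq_mul] using h1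
  have hsingle : ∀ k, g (Pi.single i 1) j * f (Pi.single j 1) k
      = if k = i then (1:K) else 0 := by
    intro k
    have h2 := factFG k
    rw [Finset.sum_eq_single j (fun l _ hl => by rw [hgcol l hl, zero_mul])
      (fun h => absurd (Finset.mem_univ j) h)] at h2
    exact h2
  refine ⟨i, f (Pi.single j 1) i, hfi, funext fun k => ?_⟩
  rw [Pi.single_apply]
  by_cases hk : k = i
  · rw [if_pos hk, hk]
  · rw [if_neg hk]
    have := hsingle k
    rw [if_neg hk] at this
    exact (mul_eq_zero.1 this).resolve_left hgi

end Aux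

private def mkPhi {K : Type*} [Semifield K] {n : ℕ} {M : Type*} [AddCommMonoid M] [Module K M]
    (u : Fin n → M) : (Fin n → K) →ₗ[K] M where
  toFun x := ∑ i, x i • u i
  map_add' x y := by
    simp only [Pi.add_apply, add_smul, Finset.sum_add_distrib]
  map_smul' a x := by
    simp only [Pi.smul_apply, smul_eq_mul, RingHom.id_apply, Finset.smul_sum, mul_smul]

private lemma mkPhi_single {K : Type*} [Semifield K] {n : ℕ} {M : Type*} [AddCommMonoid M]
    [Module K M] (u : Fin n → M) (j : Fin n) (a : K) :
    mkPhi u (Pi.single j a) = a • u j := by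
  show (∑ i, (Pi.single j a : Fin n → K) i • u i) = a • u j
  rw [Finset.sum_eq_single j (fun l _ hl => by rw [Pi.single_eq_of_ne hl, zero_smul])
    (fun h => absurd (Finset.mem_univ j) h), Pi.single_eq_same]

/-- For an indecomposable representation `V = K^n` of a finite group `G` over
an idempotent semifield `K`, with `H` the stabilizer of the basis line
spanned by `v = e_{i₀}`, the homomorphisms of representations `V → W` are in
bijection with the `H`-invariant elements of `W`, via `φ ↦ φ(v)`. -/
theorem homs_correspond_to_invariant_elements
    (K G : Type*) [Semifield K] (hidem : ∀ a : K, a + a = a)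
    [Group G] [Fintype G] (n m : ℕ)
    (ρ : Representation K G (Fin n → K)) (η : Representation K G (Fin m → K))
    (hindec : ¬ ∃ p q : Submodule K (Fin n → K),
        (∀ g : G, ∀ y ∈ p, ρ g y ∈ p) ∧ (∀ g : G, ∀ y ∈ q, ρ g y ∈ q) ∧
        p ≠ ⊥ ∧ q ≠ ⊥ ∧
        ∀ z : Fin n → K, ∃! w : p × q, (w.1 : Fin n → K) + (w.2 : Fin n → K) = z)
    (i₀ : Fin n) (H : Subgroup G)
    (hH : ∀ g : G, g ∈ H ↔
        Submodule.map (ρ g) (Submodule.span K {Pi.single i₀ (1 : K)}) =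
          Submodule.span K {Pi.single i₀ (1 : K)}) :
    ∃ e : {φ : (Fin n → K) →ₗ[K] (Fin m → K) //
              ∀ (g : G) (x : Fin n → K), φ (ρ g x) = η g (φ x)} ≃
          {w : Fin m → K // ∀ h ∈ H, η h w = w},
      ∀ φ, (e φ : Fin m → K) = φ.1 (Pi.single i₀ (1 : K)) := by
  classical
  have ρmul : ∀ (g g' : G) (x : Fin n → K), ρ (g * g') x = ρ g (ρ g' x) := by
    intro g g' x; rw [map_mul]; rfl
  have ρone : ∀ x : Fin n → K, ρ (1 : G) x = x := by intro x; rw [map_one]; rfl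
  have ρinv : ∀ (g : G) (x : Fin n → K), ρ g⁻¹ (ρ g x) = x := by
    intro g x; rw [← ρmul, inv_mul_cancel, ρone]
  have ηmul : ∀ (g g' : G) (x : Fin m → K), η (g * g') x = η g (η g' x) := by
    intro g g' x; rw [map_mul]; rfl
  have mono : ∀ (g : G) (j : Fin n), ∃ i c, c ≠ 0 ∧ ρ g (Pi.single j 1) = Pi.single i c := by
    intro g j
    exact monomial hidem (ρ g) (ρ g⁻¹)
      (fun x => by rw [← ρmul, mul_inv_cancel, ρone]) (ρinv g) j
  -- membership criterion for H
  have Hmem : ∀ (g : G) (c : K), c ≠ 0 →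
      ρ g (Pi.single i₀ 1) = c • (Pi.single i₀ 1 : Fin n → K) → g ∈ H := by
    intro g c hc hgv
    refine (hH g).2 ?_
    rw [Submodule.map_span, Set.image_singleton, hgv,
      Submodule.span_singleton_smul_eq (IsUnit.mk0 c hc)]
  have Hfix : ∀ h ∈ H, ρ h (Pi.single i₀ 1) = (Pi.single i₀ 1 : Fin n → K) := by
    intro h hh
    have h1 : ρ h (Pi.single i₀ 1) ∈ Submodule.span K {(Pi.single i₀ 1 : Fin n → K)} := by
      rw [← (hH h).1 hh]
      exact Submodule.mem_map_of_mem (Submodule.mem_span_singleton_self _)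
    obtain ⟨c, hc⟩ := Submodule.mem_span_singleton.1 h1
    have hcne : c ≠ 0 := by
      intro h0
      rw [h0, zero_smul] at hc
      have h2 : (Pi.single i₀ 1 : Fin n → K) = 0 := by
        rw [← ρinv h (Pi.single i₀ 1), ← hc, map_zero]
      have h3 := congrFun h2 i₀
      rw [Pi.single_eq_same, Pi.zero_apply] at h3
      exact one_ne_zero h3
    have hpow : ∀ k : ℕ, ρ (h ^ k) (Pi.single i₀ 1) = c ^ k • (Pi.single i₀ 1 : Fin n → K) := by
      intro k
      induction k with
      | zero => rw [pow_zero, pow_zero, one_smul, ρone]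
      | succ k ih =>
        rw [pow_succ, ρmul, ← hc, map_smul, ih, smul_smul, pow_succ, mul_comm]
    have hck : c ^ orderOf h = 1 := by
      have h2 := hpow (orderOf h)
      rw [pow_orderOf_eq_one, ρone] at h2
      have h3 := congrFun h2 i₀
      rw [Pi.single_eq_same, Pi.smul_apply, Pi.single_eq_same, smul_eq_mul, mul_one] at h3
      exact h3.symm
    have hc1 : c = 1 := idem_pow_eq_one hidem hcne (orderOf_pos h) hck
    rw [← hc, hc1, one_smul]
  -- the orbit property
  set P : Fin n → Prop := fun i => ∃ g c, c ≠ 0 ∧ ρ g (Pi.single i₀ 1) = Pi.single i c with hP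
  have hP₀ : P i₀ := ⟨1, 1, one_ne_zero, by rw [ρone]⟩
  have hclose : ∀ (g : G) (i i' : Fin n) (c' : K), c' ≠ 0 →
      ρ g (Pi.single i 1) = Pi.single i' c' → P i → P i' := by
    rintro g i i' c' hc' hg ⟨g₀, c₀, hc₀, hg₀⟩
    refine ⟨g * g₀, c₀ * c', mul_ne_zero hc₀ hc', ?_⟩
    rw [ρmul, hg₀, single_eq_smul i c₀, map_smul, hg, single_eq_smul i' c', smul_smul,
      ← single_eq_smul]
  have hmonoinv : ∀ (g : G) (i i' : Fin n) (c' : K), c' ≠ 0 →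
      ρ g (Pi.single i 1) = Pi.single i' c' →
      ρ g⁻¹ (Pi.single i' 1) = Pi.single i c'⁻¹ := by
    intro g i i' c' hc' hg
    have h1 : c' • ρ g⁻¹ (Pi.single i' 1) = Pi.single i 1 := by
      rw [← map_smul, ← single_eq_smul, ← hg, ρinv]
    have h2 : ρ g⁻¹ (Pi.single i' 1) = c'⁻¹ • (Pi.single i 1 : Fin n → K) := by
      rw [← h1, inv_smul_smul₀ hc']
    rw [h2, ← single_eq_smul]
  have hclose' : ∀ (g : G) (i i' : Fin n) (c' : K), c' ≠ 0 →
      ρ g (Pi.single i 1) = Pi.single i' c' → P i' → P i := by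
    intro g i i' c' hc' hg hPi'
    exact hclose g⁻¹ i' i c'⁻¹ (inv_ne_zero hc') (hmonoinv g i i' c' hc' hg) hPi'
  have hall : ∀ i, P i := by
    by_contra hcon
    push_neg at hcon
    obtain ⟨i₁, hi₁⟩ := hcon
    let p : Submodule K (Fin n → K) :=
      { carrier := {z | ∀ i, ¬ P i → z i = 0}
        add_mem' := fun {a b} ha hb i hi => by
          rw [Pi.add_apply, ha i hi, hb i hi, add_zero]
        zero_mem' := fun i _ => rfl
        smul_mem' := fun c z hz i hi => by rw [Pi.smul_apply, hz i hi, smul_zero] }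
    let q : Submodule K (Fin n → K) :=
      { carrier := {z | ∀ i, P i → z i = 0}
        add_mem' := fun {a b} ha hb i hi => by
          rw [Pi.add_apply, ha i hi, hb i hi, add_zero]
        zero_mem' := fun i _ => rfl
        smul_mem' := fun c z hz i hi => by rw [Pi.smul_apply, hz i hi, smul_zero] }
    have hpmem : ∀ z : Fin n → K, z ∈ p ↔ ∀ i, ¬ P i → z i = 0 := fun z => Iff.rfl
    have hqmem : ∀ z : Fin n → K, z ∈ q ↔ ∀ i, P i → z i = 0 := fun z => Iff.rfl
    refine hindec ⟨p, q, ?_, ?_, ?_, ?_, ?_⟩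
    · -- invariance of p
      intro g z hz
      rw [hpmem] at hz
      rw [hpmem]
      intro k hk
      rw [lin_apply (ρ g) z, Finset.sum_apply]
      refine Finset.sum_eq_zero fun i _ => ?_
      by_cases hPi : P i
      · obtain ⟨i', c', hc', hgi⟩ := mono g i
        have hi' : P i' := hclose g i i' c' hc' hgi hPi
        rw [Pi.smul_apply, hgi, Pi.single_apply,
          if_neg (fun hk' : k = i' => hk (hk' ▸ hi')), smul_zero]
      · rw [Pi.smul_apply, hz i hPi, zero_smul]
    · -- invariance of q
      intro g z hz
      rw [hqmem] at hz
      rw [hqmem]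
      intro k hk
      rw [lin_apply (ρ g) z, Finset.sum_apply]
      refine Finset.sum_eq_zero fun i _ => ?_
      by_cases hPi : P i
      · rw [Pi.smul_apply, hz i hPi, zero_smul]
      · obtain ⟨i', c', hc', hgi⟩ := mono g i
        have hi' : ¬ P i' := fun hp => hPi (hclose' g i i' c' hc' hgi hp)
        rw [Pi.smul_apply, hgi, Pi.single_apply,
          if_neg (fun hk' : k = i' => hi' (hk' ▸ hk)), smul_zero]
    · -- p ≠ ⊥
      refine Submodule.ne_bot_iff _ |>.2 ⟨Pi.single i₀ 1, ?_, ?_⟩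
      · rw [hpmem]
        intro i hi
        exact Pi.single_eq_of_ne (fun hii : i = i₀ => hi (hii ▸ hP₀)) 1
      · intro h0
        have := congrFun h0 i₀
        rw [Pi.single_eq_same, Pi.zero_apply] at this
        exact one_ne_zero this
    · -- q ≠ ⊥
      refine Submodule.ne_bot_iff _ |>.2 ⟨Pi.single i₁ 1, ?_, ?_⟩
      · rw [hqmem]
        intro i hi
        exact Pi.single_eq_of_ne (fun hii : i = i₁ => hi₁ (hii ▸ hi)) 1
      · intro h0
        have := congrFun h0 i₁
        rw [Pi.single_eq_same, Pi.zero_apply] at this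
        exact one_ne_zero this
    · -- unique decomposition
      intro z
      have hamem : (fun i => if P i then z i else 0) ∈ p := by
        rw [hpmem]; intro i hi; exact if_neg hi
      have hbmem : (fun i => if P i then 0 else z i) ∈ q := by
        rw [hqmem]; intro i hi; exact if_pos hi
      refine ⟨(⟨fun i => if P i then z i else 0, hamem⟩,
               ⟨fun i => if P i then 0 else z i, hbmem⟩), ?_, ?_⟩
      · funext i
        by_cases hPi : P i <;> simp [hPi]
      · rintro ⟨⟨a, ha⟩, ⟨b, hb⟩⟩ hw
        rw [hpmem] at ha
        rw [hqmem] at hb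
        have h1 : ∀ i, a i + b i = z i := fun i => congrFun hw i
        refine Prod.ext ?_ ?_
        · apply Subtype.ext
          funext i
          by_cases hPi : P i
          · have h2 := h1 i
            rw [hb i hPi, add_zero] at h2
            simp only [hPi, if_pos]
            exact h2
          · simp only [hPi, if_neg, ite_false]
            exact ha i hPi
        · apply Subtype.ext
          funext i
          by_cases hPi : P i
          · simp only [hPi, if_pos, ite_true]
            exact hb i hPi
          · have h2 := h1 i
            rw [ha i hPi, zero_add] at h2
            simp only [hPi, if_neg, ite_false]
            exact h2
  choose gg cc hcc hgg using hall
  have hgginv : ∀ i, ρ (gg i)⁻¹ (Pi.single i 1) = Pi.single i₀ (cc i)⁻¹ :=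
    fun i => hmonoinv (gg i) i₀ i (cc i) (hcc i) (hgg i)
  -- key structural lemma
  have hkey : ∀ (g : G) (j : Fin n), ∃ k h, h ∈ H ∧ g * gg j = gg k * h ∧
      ρ g (Pi.single j 1) = (cc j)⁻¹ • (Pi.single k (cc k) : Fin n → K) := by
    intro g j
    obtain ⟨k, d, hd, hkd⟩ := mono (g * gg j) i₀
    have h3 : ρ g (Pi.single j (cc j)) = Pi.single k d := by
      rw [← hkd, ρmul, hgg j]
    have h1 : ρ g (Pi.single j 1) = (cc j)⁻¹ • (Pi.single k d : Fin n → K) := by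
      rw [single_eq_smul j (cc j), map_smul] at h3
      rw [← h3, inv_smul_smul₀ (hcc j)]
    have hρh : ρ ((gg k)⁻¹ * (g * gg j)) (Pi.single i₀ 1)
        = (d * (cc k)⁻¹) • (Pi.single i₀ 1 : Fin n → K) := by
      rw [ρmul, hkd, single_eq_smul k d, map_smul, hgginv k, single_eq_smul i₀ (cc k)⁻¹,
        smul_smul]
    have hmem : (gg k)⁻¹ * (g * gg j) ∈ H :=
      Hmem _ _ (mul_ne_zero hd (inv_ne_zero (hcc k))) hρh
    have hfix := Hfix _ hmem
    rw [hρh] at hfix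
    have hd1 : d * (cc k)⁻¹ = 1 := by
      have h4 := congrFun hfix i₀
      rw [Pi.smul_apply, Pi.single_eq_same, smul_eq_mul, mul_one] at h4
      exact h4
    have hdc : d = cc k := by
      calc d = d * ((cc k)⁻¹ * cc k) := by rw [inv_mul_cancel₀ (hcc k), mul_one]
      _ = (d * (cc k)⁻¹) * cc k := (mul_assoc _ _ _).symm
      _ = cc k := by rw [hd1, one_mul]
    refine ⟨k, (gg k)⁻¹ * (g * gg j), hmem, ?_, by rw [h1, hdc]⟩
    rw [← mul_assoc, mul_inv_cancel, one_mul]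
  -- the equivalence
  refine ⟨⟨fun φ => ⟨φ.1 (Pi.single i₀ 1), fun h hh => ?_⟩,
    fun w => ⟨mkPhi (fun i => (cc i)⁻¹ • η (gg i) w.1), ?_⟩, ?_, ?_⟩, fun φ => rfl⟩
  · -- invariance of φ(v)
    rw [← φ.2 h (Pi.single i₀ 1), Hfix h hh]
  · -- intertwining of constructed map
    intro g x
    have hcomp : mkPhi (fun i => (cc i)⁻¹ • η (gg i) w.1) ∘ₗ ρ g
        = (η g : (Fin m → K) →ₗ[K] (Fin m → K)) ∘ₗ mkPhi (fun i => (cc i)⁻¹ • η (gg i) w.1) := by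
      apply lin_ext
      intro j
      rw [LinearMap.comp_apply, LinearMap.comp_apply]
      obtain ⟨k, h, hmem, hdecomp, heq⟩ := hkey g j
      rw [heq, map_smul, mkPhi_single, mkPhi_single, one_smul, smul_inv_smul₀ (hcc k),
        map_smul, ← ηmul, hdecomp, ηmul, w.2 h hmem]
    exact LinearMap.congr_fun hcomp x
  · -- left inverse
    intro φ
    apply Subtype.ext
    apply lin_ext
    intro j
    rw [mkPhi_single, one_smul, ← φ.2 (gg j) (Pi.single i₀ 1), hgg j, single_eq_smul j (cc j),
      map_smul, inv_smul_smul₀ (hcc j)]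
  · -- right inverse
    intro w
    apply Subtype.ext
    show mkPhi _ (Pi.single i₀ 1) = w.1
    rw [mkPhi_single, one_smul]
    have hmem : gg i₀ ∈ H := by
      refine Hmem (gg i₀) (cc i₀) (hcc i₀) ?_
      rw [hgg i₀]
      exact single_eq_smul i₀ (cc i₀)
    have h1 : cc i₀ = 1 := by
      have h2 := Hfix (gg i₀) hmem
      rw [hgg i₀] at h2
      have h3 := congrFun h2 i₀
      rw [Pi.single_eq_same, Pi.single_eq_same] at h3
      exact h3
    rw [h1, inv_one, one_smul, w.2 (gg i₀) hmem]
end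

section
/- Let G be a finite group, K an idempotent semifield, and V, W indecomposable representations of G over K with associated stabilizer subgroups H_V and H_W. Then the set of homomorphisms of representations V → W is in bijection with the set of functions from the double coset space H_V\G/H_W to K. -/
section AuxLemmas
variable {K : Type*} [Semifield K]

lemma idemAux_zsf (hidem : ∀ a : K, a + a = a) {a b : K} (h : a + b = 0) : a = 0 := by
  have h2 : a + (a + b) = a + b := by rw [← add_assoc, hidem]
  rw [h, add_zero] at h2; exact h2

lemma idemAux_sum_zsf {ι : Type*} (hidem : ∀ a : K, a + a = a) {s : Finset ι} {f : ι → K}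
    (h : ∑ i ∈ s, f i = 0) {i : ι} (hi : i ∈ s) : f i = 0 := by
  classical
  rw [← Finset.add_sum_erase s f hi] at h
  exact idemAux_zsf hidem h

lemma idemAux_pow_eq_one (hidem : ∀ a : K, a + a = a) {c : K} {k : ℕ} (hk : k ≠ 0)
    (h : c ^ k = 1) : c = 1 := by
  obtain ⟨mm, rfl⟩ := Nat.exists_eq_succ_of_ne_zero hk
  set s : K := ∑ t ∈ Finset.range (mm+1), c ^ t with hs
  have hs0 : s ≠ 0 := by
    intro h0
    have h1 : (c:K) ^ 0 = 0 :=
      idemAux_sum_zsf hidem (hs ▸ h0) (Finset.mem_range.2 (Nat.succ_pos mm))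
    simp at h1
  have hmul : c * s = 1 * s := by
    rw [one_mul, hs, Finset.mul_sum]
    have h1 : ∑ t ∈ Finset.range (mm+1), c * c ^ t = ∑ t ∈ Finset.range (mm+1), c ^ (t+1) := by
      apply Finset.sum_congr rfl; intro t _; rw [pow_succ, mul_comm]
    rw [h1, Finset.sum_range_succ, h, Finset.sum_range_succ']
    simp
  exact mul_right_cancel₀ hs0 hmul

lemma idemAux_single_smul_eq {n : ℕ} {s s' : K} {j j' : Fin n} (hs' : s' ≠ 0)
    (h : s • (Pi.single j 1 : Fin n → K) = s' • (Pi.single j' 1 : Fin n → K)) :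
    j = j' ∧ s = s' := by
  have h1 := congrFun h j'
  have h2 := congrFun h j
  by_cases hjj : j = j'
  · subst hjj
    simp [Pi.single_apply] at h2
    exact ⟨rfl, h2⟩
  · exfalso
    simp [Pi.single_apply, hjj, Ne.symm hjj] at h1
    exact hs' h1.symm

lemma idemAux_expand_pi {n : ℕ} (x : Fin n → K) :
    x = ∑ i, x i • (Pi.single i 1 : Fin n → K) := by
  funext j
  rw [Finset.sum_apply]
  simp [Pi.single_apply]

lemma idemAux_monomial {n : ℕ} (hidem : ∀ a : K, a + a = a)
    (A B : (Fin n → K) →ₗ[K] (Fin n → K))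
    (hBA : ∀ x, B (A x) = x) (hAB : ∀ x, A (B x) = x) (i : Fin n) :
    ∃ (j : Fin n) (s : K), s ≠ 0 ∧ A (Pi.single i 1) = s • (Pi.single j 1 : Fin n → K) := by
  set u := A (Pi.single i (1:K)) with hu
  have hBu : (B u) i = 1 := by rw [hu, hBA]; simp [Pi.single_apply]
  have hBu2 : (B u) i = ∑ j, u j * (B (Pi.single j 1)) i := by
    conv_lhs => rw [show (u : Fin n → K) = ∑ j, u j • (Pi.single j 1 : Fin n → K) from
      idemAux_expand_pi u]
    rw [map_sum, Finset.sum_apply]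
    apply Finset.sum_congr rfl
    intro j _
    rw [map_smul]
    rfl
  have hex : ∃ j, u j * (B (Pi.single j 1)) i ≠ 0 := by
    by_contra hc
    push_neg at hc
    rw [hBu2] at hBu
    rw [Finset.sum_eq_zero (fun j _ => hc j)] at hBu
    exact zero_ne_one hBu
  obtain ⟨j, hj⟩ := hex
  have huj : u j ≠ 0 := fun h0 => hj (by rw [h0, zero_mul])
  have hq : (B (Pi.single j 1)) i ≠ 0 := fun h0 => hj (by rw [h0, mul_zero])
  refine ⟨j, u j, huj, ?_⟩
  funext j'
  by_cases hjj : j' = j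
  · subst hjj; simp [Pi.single_apply]
  · have h0 : (A (B (Pi.single j 1))) j' = 0 := by
      rw [hAB]; simp [Pi.single_apply, hjj]
    have hexp : (A (B (Pi.single j 1))) j' =
        ∑ i', (B (Pi.single j 1)) i' * (A (Pi.single i' 1)) j' := by
      conv_lhs => rw [show (B (Pi.single j 1) : Fin n → K) =
        ∑ i', (B (Pi.single j 1)) i' • (Pi.single i' 1 : Fin n → K) from idemAux_expand_pi _]
      rw [map_sum, Finset.sum_apply]
      apply Finset.sum_congr rfl
      intro i' _
      rw [map_smul]
      rfl
    rw [hexp] at h0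
    have hterm : (B (Pi.single j 1)) i * (A (Pi.single i 1)) j' = 0 :=
      idemAux_sum_zsf hidem h0 (Finset.mem_univ i)
    rcases mul_eq_zero.1 hterm with h | h
    · exact absurd h hq
    · simp [Pi.single_apply, hjj]
      exact h
end AuxLemmas

def idemAux_coordSub (K : Type*) [Semifield K] {n : ℕ} (S : Set (Fin n)) :
    Submodule K (Fin n → K) where
  carrier := {x | ∀ i, i ∉ S → x i = 0}
  add_mem' := fun hx hy i hi => by rw [Pi.add_apply, hx i hi, hy i hi, add_zero]
  zero_mem' := fun i hi => rfl
  smul_mem' := fun r x hx i hi => by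
    show r • x i = 0
    rw [hx i hi, smul_zero]

section ActionLemmas
variable {K : Type*} [Semifield K] {G : Type*} [Group G] {n : ℕ}
variable (ρ : Representation K G (Fin n → K)) (σ : G → Fin n → Fin n) (c : G → Fin n → K)
variable (hc : ∀ g i, c g i ≠ 0)
variable (hspec : ∀ g i, ρ g (Pi.single i 1) = c g i • (Pi.single (σ g i) 1 : Fin n → K))

include hc hspec

lemma idemAux_sigma_mul (g g' : G) (i : Fin n) :
    σ (g * g') i = σ g (σ g' i) ∧ c (g * g') i = c g (σ g' i) * c g' i := by
  have h1 : ρ (g * g') (Pi.single i 1) =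
      (c g (σ g' i) * c g' i) • (Pi.single (σ g (σ g' i)) 1 : Fin n → K) := by
    rw [map_mul, Module.End.mul_apply, hspec, map_smul, hspec, smul_smul, mul_comm]
  have h2 := (hspec (g*g') i).symm.trans h1
  have h3 := idemAux_single_smul_eq (mul_ne_zero (hc g (σ g' i)) (hc g' i)) h2
  exact ⟨h3.1, h3.2⟩

lemma idemAux_sigma_one (i : Fin n) : σ 1 i = i ∧ c 1 i = 1 := by
  have h1 : (1:K) • (Pi.single i 1 : Fin n → K) = c 1 i • (Pi.single (σ 1 i) 1 : Fin n → K) := by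
    rw [one_smul, ← hspec, map_one, Module.End.one_apply]
  have h2 := idemAux_single_smul_eq (hc 1 i) h1
  exact ⟨h2.1.symm, h2.2.symm⟩

lemma idemAux_sigma_linv (g : G) (i : Fin n) : σ g⁻¹ (σ g i) = i := by
  have h := (idemAux_sigma_mul ρ σ c hc hspec g⁻¹ g i).1
  rw [inv_mul_cancel] at h
  rw [← h, (idemAux_sigma_one ρ σ c hc hspec i).1]

lemma idemAux_sigma_rinv (g : G) (i : Fin n) : σ g (σ g⁻¹ i) = i := by
  have h := idemAux_sigma_linv ρ σ c hc hspec g⁻¹ i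
  rwa [inv_inv] at h

lemma idemAux_sigma_inj (g : G) : Function.Injective (σ g) :=
  Function.LeftInverse.injective (g := σ g⁻¹) (idemAux_sigma_linv ρ σ c hc hspec g)

lemma idemAux_sigma_surj (g : G) : Function.Surjective (σ g) :=
  Function.RightInverse.surjective (g := σ g⁻¹) (idemAux_sigma_rinv ρ σ c hc hspec g)

lemma idemAux_coord (g : G) (x : Fin n → K) (i : Fin n) :
    ρ g x (σ g i) = c g i * x i := by
  conv_lhs => rw [show x = ∑ i', x i' • (Pi.single i' 1 : Fin n → K) from idemAux_expand_pi x]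
  rw [map_sum, Finset.sum_apply]
  rw [Finset.sum_eq_single i]
  · rw [map_smul, Pi.smul_apply, hspec, Pi.smul_apply, Pi.single_apply, if_pos rfl,
      smul_eq_mul, smul_eq_mul, mul_one, mul_comm]
  · intro i' _ hne
    rw [map_smul, Pi.smul_apply, hspec, Pi.smul_apply, Pi.single_apply,
      if_neg (fun hh => hne (idemAux_sigma_inj ρ σ c hc hspec g hh).symm), smul_eq_mul,
      smul_eq_mul, mul_zero, mul_zero]
  · intro h; exact absurd (Finset.mem_univ i) h

lemma idemAux_trans_of_indec (i₀ : Fin n)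
    (hindec : ¬ ∃ p q : Submodule K (Fin n → K),
        (∀ g : G, ∀ y ∈ p, ρ g y ∈ p) ∧ (∀ g : G, ∀ y ∈ q, ρ g y ∈ q) ∧
        p ≠ ⊥ ∧ q ≠ ⊥ ∧
        ∀ z : Fin n → K, ∃! w : p × q, (w.1 : Fin n → K) + (w.2 : Fin n → K) = z) :
    ∀ i, ∃ g, σ g i₀ = i := by
  classical
  by_contra hcon
  push_neg at hcon
  obtain ⟨i₁, hi₁⟩ := hcon
  set S : Set (Fin n) := {i | ∃ g : G, σ g i₀ = i} with hS
  have hSmem : ∀ (g : G) (i : Fin n), i ∈ S ↔ σ g i ∈ S := by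
    intro g i
    constructor
    · rintro ⟨h, rfl⟩
      exact ⟨g * h, (idemAux_sigma_mul ρ σ c hc hspec g h i₀).1⟩
    · rintro ⟨h, hh⟩
      refine ⟨g⁻¹ * h, ?_⟩
      rw [(idemAux_sigma_mul ρ σ c hc hspec g⁻¹ h i₀).1, hh]
      exact idemAux_sigma_linv ρ σ c hc hspec g i
  have hinv : ∀ (T : Set (Fin n)), (∀ (g : G) (i : Fin n), i ∈ T ↔ σ g i ∈ T) →
      ∀ g : G, ∀ y ∈ idemAux_coordSub K T, ρ g y ∈ idemAux_coordSub K T := by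
    intro T hT g y hy i hi
    have h1 : i = σ g (σ g⁻¹ i) := (idemAux_sigma_rinv ρ σ c hc hspec g i).symm
    rw [h1, idemAux_coord ρ σ c hc hspec]
    have h2 : σ g⁻¹ i ∉ T := fun hmem => hi (h1 ▸ (hT g (σ g⁻¹ i)).1 hmem)
    rw [hy _ h2, mul_zero]
  have hScomp : ∀ (g : G) (i : Fin n), i ∈ Sᶜ ↔ σ g i ∈ Sᶜ := by
    intro g i
    simp only [Set.mem_compl_iff]
    exact not_congr (hSmem g i)
  apply hindec
  refine ⟨idemAux_coordSub K S, idemAux_coordSub K Sᶜ, hinv S hSmem, hinv Sᶜ hScomp, ?_, ?_, ?_⟩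
  · rw [Submodule.ne_bot_iff]
    refine ⟨Pi.single i₀ 1, ?_, ?_⟩
    · intro i hi
      have : i ≠ i₀ := fun h => hi (h ▸ ⟨1, (idemAux_sigma_one ρ σ c hc hspec i₀).1⟩)
      simp [Pi.single_apply, this]
    · intro h
      have := congrFun h i₀
      simp at this
  · rw [Submodule.ne_bot_iff]
    refine ⟨Pi.single i₁ 1, ?_, ?_⟩
    · intro i hi
      rw [Set.notMem_compl_iff] at hi
      have : i ≠ i₁ := by rintro rfl; exact hi₁ _ (hi.choose_spec)
      simp [Pi.single_apply, this]
    · intro h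
      have := congrFun h i₁
      simp at this
  · intro z
    refine ⟨(⟨fun i => if i ∈ S then z i else 0, ?_⟩,
             ⟨fun i => if i ∈ S then 0 else z i, ?_⟩), ?_, ?_⟩
    · intro i hi; show (if i ∈ S then z i else 0) = 0; rw [if_neg hi]
    · intro i hi
      rw [Set.notMem_compl_iff] at hi
      show (if i ∈ S then 0 else z i) = 0
      rw [if_pos hi]
    · funext i
      show (if i ∈ S then z i else 0) + (if i ∈ S then 0 else z i) = z i
      by_cases h : i ∈ S <;> simp [h]
    · rintro ⟨a, b⟩ hab
      have ha : ∀ i, (a : Fin n → K) i + (b : Fin n → K) i = z i := fun i => congrFun hab i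
      refine Prod.ext ?_ ?_ <;> apply Subtype.ext <;> funext i
      · show (a : Fin n → K) i = if i ∈ S then z i else 0
        by_cases h : i ∈ S
        · rw [if_pos h, ← ha i, b.2 i (Set.notMem_compl_iff.2 h), add_zero]
        · rw [if_neg h, a.2 i h]
      · show (b : Fin n → K) i = if i ∈ S then 0 else z i
        by_cases h : i ∈ S
        · rw [if_pos h, b.2 i (Set.notMem_compl_iff.2 h)]
        · rw [if_neg h, ← ha i, a.2 i h, zero_add]

lemma idemAux_mem_iff_fix (i₀ : Fin n) (HV : Subgroup G)
    (hHV : ∀ g : G, g ∈ HV ↔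
        Submodule.map (ρ g) (Submodule.span K {Pi.single i₀ (1 : K)}) =
          Submodule.span K {Pi.single i₀ (1 : K)})
    (g : G) : g ∈ HV ↔ σ g i₀ = i₀ := by
  rw [hHV g]
  have hmap : Submodule.map (ρ g) (Submodule.span K {Pi.single i₀ (1:K)}) =
      Submodule.span K {(Pi.single (σ g i₀) 1 : Fin n → K)} := by
    rw [Submodule.map_span, Set.image_singleton, hspec]
    exact Submodule.span_singleton_smul_eq (isUnit_iff_ne_zero.2 (hc g i₀)) _
  rw [hmap]
  constructor
  · intro h
    have hmem : (Pi.single (σ g i₀) 1 : Fin n → K) ∈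
        Submodule.span K {(Pi.single i₀ 1 : Fin n → K)} := by
      rw [← h]; exact Submodule.mem_span_singleton_self _
    rw [Submodule.mem_span_singleton] at hmem
    obtain ⟨t, ht⟩ := hmem
    by_contra hne
    have := congrFun ht (σ g i₀)
    simp [Pi.single_apply, hne] at this
  · intro h; rw [h]

lemma idemAux_fix (hidem : ∀ a : K, a + a = a) [Fintype G] (i₀ : Fin n) (g : G)
    (hfix : σ g i₀ = i₀) : ρ g (Pi.single i₀ 1) = Pi.single i₀ 1 := by
  have hpow : ∀ k : ℕ, σ (g ^ k) i₀ = i₀ ∧ c (g ^ k) i₀ = c g i₀ ^ k := by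
    intro k
    induction k with
    | zero =>
      rw [pow_zero, pow_zero]
      exact idemAux_sigma_one ρ σ c hc hspec i₀
    | succ k ih =>
      rw [pow_succ, pow_succ]
      have h := idemAux_sigma_mul ρ σ c hc hspec (g^k) g i₀
      constructor
      · rw [h.1, hfix, ih.1]
      · rw [h.2, hfix, ih.2]
  have hcard := hpow (Fintype.card G)
  rw [pow_card_eq_one] at hcard
  have h1 : c g i₀ ^ Fintype.card G = 1 := by
    rw [← hcard.2]
    exact (idemAux_sigma_one ρ σ c hc hspec i₀).2
  have hone := idemAux_pow_eq_one hidem Fintype.card_ne_zero h1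
  rw [hspec g i₀, hfix, hone, one_smul]

end ActionLemmas
/-- For indecomposable representations `V = K^n`, `W = K^m` of a finite group
`G` over an idempotent semifield `K`, with associated stabilizer subgroups
`H_V`, `H_W` (stabilizers of basis lines), the homomorphisms of
representations `V → W` are in bijection with functions from the double coset
space `H_V \ G / H_W` to `K`. -/
theorem homs_correspond_to_double_cosets
    (K G : Type*) [Semifield K] (hidem : ∀ a : K, a + a = a)
    [Group G] [Fintype G] (n m : ℕ)
    (ρ : Representation K G (Fin n → K)) (η : Representation K G (Fin m → K))
    (hindecV : ¬ ∃ p q : Submodule K (Fin n → K),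
        (∀ g : G, ∀ y ∈ p, ρ g y ∈ p) ∧ (∀ g : G, ∀ y ∈ q, ρ g y ∈ q) ∧
        p ≠ ⊥ ∧ q ≠ ⊥ ∧
        ∀ z : Fin n → K, ∃! w : p × q, (w.1 : Fin n → K) + (w.2 : Fin n → K) = z)
    (hindecW : ¬ ∃ p q : Submodule K (Fin m → K),
        (∀ g : G, ∀ y ∈ p, η g y ∈ p) ∧ (∀ g : G, ∀ y ∈ q, η g y ∈ q) ∧
        p ≠ ⊥ ∧ q ≠ ⊥ ∧
        ∀ z : Fin m → K, ∃! w : p × q, (w.1 : Fin m → K) + (w.2 : Fin m → K) = z)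
    (i₀ : Fin n) (j₀ : Fin m) (HV HW : Subgroup G)
    (hHV : ∀ g : G, g ∈ HV ↔
        Submodule.map (ρ g) (Submodule.span K {Pi.single i₀ (1 : K)}) =
          Submodule.span K {Pi.single i₀ (1 : K)})
    (hHW : ∀ g : G, g ∈ HW ↔
        Submodule.map (η g) (Submodule.span K {Pi.single j₀ (1 : K)}) =
          Submodule.span K {Pi.single j₀ (1 : K)}) :
    Nonempty
      ({φ : (Fin n → K) →ₗ[K] (Fin m → K) //
          ∀ (g : G) (x : Fin n → K), φ (ρ g x) = η g (φ x)} ≃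
        (DoubleCoset.Quotient (HV : Set G) (HW : Set G) → K)) := by
  classical
  -- monomial structure of the two representations
  have hinvV : ∀ (g : G) (x : Fin n → K), ρ g⁻¹ (ρ g x) = x := fun g x => by
    rw [← Module.End.mul_apply, ← map_mul, inv_mul_cancel, map_one, Module.End.one_apply]
  have hinvV' : ∀ (g : G) (x : Fin n → K), ρ g (ρ g⁻¹ x) = x := fun g x => by
    rw [← Module.End.mul_apply, ← map_mul, mul_inv_cancel, map_one, Module.End.one_apply]
  have hinvW : ∀ (g : G) (x : Fin m → K), η g⁻¹ (η g x) = x := fun g x => by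
    rw [← Module.End.mul_apply, ← map_mul, inv_mul_cancel, map_one, Module.End.one_apply]
  have hinvW' : ∀ (g : G) (x : Fin m → K), η g (η g⁻¹ x) = x := fun g x => by
    rw [← Module.End.mul_apply, ← map_mul, mul_inv_cancel, map_one, Module.End.one_apply]
  choose σV cV hcV hsV using fun (g : G) (i : Fin n) =>
    idemAux_monomial hidem (ρ g) (ρ g⁻¹) (hinvV g) (hinvV' g) i
  choose σW cW hcW hsW using fun (g : G) (j : Fin m) =>
    idemAux_monomial hidem (η g) (η g⁻¹) (hinvW g) (hinvW' g) j
  -- basic laws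
  have honeV := idemAux_sigma_one ρ σV cV hcV hsV
  have hmulV := idemAux_sigma_mul ρ σV cV hcV hsV
  have hlinvV := idemAux_sigma_linv ρ σV cV hcV hsV
  have hrinvV := idemAux_sigma_rinv ρ σV cV hcV hsV
  have hcoordV := idemAux_coord ρ σV cV hcV hsV
  have honeW := idemAux_sigma_one η σW cW hcW hsW
  have hmulW := idemAux_sigma_mul η σW cW hcW hsW
  have hlinvW := idemAux_sigma_linv η σW cW hcW hsW
  have hrinvW := idemAux_sigma_rinv η σW cW hcW hsW
  have hsurjW := idemAux_sigma_surj η σW cW hcW hsW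
  have hcoordW := idemAux_coord η σW cW hcW hsW
  -- transitivity
  have htransV := idemAux_trans_of_indec ρ σV cV hcV hsV i₀ hindecV
  have htransW := idemAux_trans_of_indec η σW cW hcW hsW j₀ hindecW
  -- stabilizer descriptions
  have hHV' : ∀ g : G, g ∈ HV ↔ σV g i₀ = i₀ := idemAux_mem_iff_fix ρ σV cV hcV hsV i₀ HV hHV
  have hHW' : ∀ g : G, g ∈ HW ↔ σW g j₀ = j₀ := idemAux_mem_iff_fix η σW cW hcW hsW j₀ HW hHW
  have hfixV : ∀ g : G, σV g i₀ = i₀ → ρ g (Pi.single i₀ 1) = Pi.single i₀ 1 :=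
    idemAux_fix ρ σV cV hcV hsV hidem i₀
  have hfixW : ∀ g : G, σW g j₀ = j₀ → η g (Pi.single j₀ 1) = Pi.single j₀ 1 :=
    idemAux_fix η σW cW hcW hsW hidem j₀
  -- choices of orbit representatives
  choose gc hgc using htransV
  choose kc hkc using htransW
  set vv : Fin n → (Fin n → K) := fun i => ρ (gc i) (Pi.single i₀ 1) with hvvdef
  set ww : Fin m → (Fin m → K) := fun j => η (kc j) (Pi.single j₀ 1) with hwwdef
  set cv : Fin n → K := fun i => cV (gc i) i₀ with hcvdef
  set dw : Fin m → K := fun j => cW (kc j) j₀ with hdwdef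
  have hcv0 : ∀ i, cv i ≠ 0 := fun i => hcV (gc i) i₀
  have hdw0 : ∀ j, dw j ≠ 0 := fun j => hcW (kc j) j₀
  have hvv : ∀ i, vv i = cv i • (Pi.single i 1 : Fin n → K) := fun i => by
    rw [hvvdef, hcvdef]
    simp only []
    rw [hsV, hgc]
  have hww : ∀ j, ww j = dw j • (Pi.single j 1 : Fin m → K) := fun j => by
    rw [hwwdef, hdwdef]
    simp only []
    rw [hsW, hkc]
  -- stabilizer elements
  have hstabV : ∀ (g : G) (i : Fin n), (gc (σV g i))⁻¹ * (g * gc i) ∈ HV := by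
    intro g i
    set j := σV g i with hj
    rw [hHV', (hmulV _ _ _).1, (hmulV _ _ _).1, hgc, ← hj]
    have h2 := hlinvV (gc j) i₀
    rw [hgc] at h2
    exact h2
  have hstabW : ∀ (g : G) (j : Fin m), (kc (σW g j))⁻¹ * (g * kc j) ∈ HW := by
    intro g j
    set j' := σW g j with hj'
    rw [hHW', (hmulW _ _ _).1, (hmulW _ _ _).1, hkc, ← hj']
    have h2 := hlinvW (kc j') j₀
    rw [hkc] at h2
    exact h2
  -- moving the rescaled basis vectors
  have hmove : ∀ (g : G) (i : Fin n), ρ g (vv i) = vv (σV g i) := by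
    intro g i
    have h1 : ρ g (vv i) = ρ (gc (σV g i)) (ρ ((gc (σV g i))⁻¹ * (g * gc i)) (Pi.single i₀ 1)) := by
      rw [hvvdef]
      simp only []
      rw [← Module.End.mul_apply, ← map_mul, ← Module.End.mul_apply, ← map_mul]
      congr 2
      group
    rw [h1, hfixV _ ((hHV' _).1 (hstabV g i))]
  have hwmove : ∀ (g : G) (j : Fin m), η g (ww j) = ww (σW g j) := by
    intro g j
    have h1 : η g (ww j) = η (kc (σW g j)) (η ((kc (σW g j))⁻¹ * (g * kc j)) (Pi.single j₀ 1)) := by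
      rw [hwwdef]
      simp only []
      rw [← Module.End.mul_apply, ← map_mul, ← Module.End.mul_apply, ← map_mul]
      congr 2
      group
    rw [h1, hfixW _ ((hHW' _).1 (hstabW g j))]
  -- scaling laws
  have hscale : ∀ (g : G) (i : Fin n), cv (σV g i) = cV g i * cv i := by
    intro g i
    have h1 : vv (σV g i) = (cV g i * cv i) • (Pi.single (σV g i) 1 : Fin n → K) := by
      rw [← hmove, hvv i, map_smul, hsV, smul_smul, mul_comm]
    rw [hvv (σV g i)] at h1
    exact (idemAux_single_smul_eq (mul_ne_zero (hcV g i) (hcv0 i)) h1).2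
  have hwscale : ∀ (g : G) (j : Fin m), dw (σW g j) = cW g j * dw j := by
    intro g j
    have h1 : ww (σW g j) = (cW g j * dw j) • (Pi.single (σW g j) 1 : Fin m → K) := by
      rw [← hwmove, hww j, map_smul, hsW, smul_smul, mul_comm]
    rw [hww (σW g j)] at h1
    exact (idemAux_single_smul_eq (mul_ne_zero (hcW g j) (hdw0 j)) h1).2
  -- the linear map attached to a matrix of coefficients
  let Φ : (Fin n → Fin m → K) → ((Fin n → K) →ₗ[K] (Fin m → K)) := fun a =>
    { toFun := fun x j => ∑ i, a i j * dw j * (cv i)⁻¹ * x i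
      map_add' := by
        intro x y
        funext j
        show (∑ i, a i j * dw j * (cv i)⁻¹ * (x i + y i)) =
          (∑ i, a i j * dw j * (cv i)⁻¹ * x i) + (∑ i, a i j * dw j * (cv i)⁻¹ * y i)
        rw [← Finset.sum_add_distrib]
        apply Finset.sum_congr rfl
        intro i _
        ring
      map_smul' := by
        intro r x
        funext j
        show (∑ i, a i j * dw j * (cv i)⁻¹ * (r * x i)) =
          r * ∑ i, a i j * dw j * (cv i)⁻¹ * x i
        rw [Finset.mul_sum]
        apply Finset.sum_congr rfl
        intro i _
        ring }
  have hΦ : ∀ a x j, Φ a x j = ∑ i, a i j * dw j * (cv i)⁻¹ * x i := fun a x j => rfl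
  -- expansion of a linear map in terms of the rescaled basis
  have hexp : ∀ (φ : (Fin n → K) →ₗ[K] (Fin m → K)) (x : Fin n → K) (j : Fin m),
      φ x j = ∑ i, x i * ((cv i)⁻¹ * φ (vv i) j) := by
    intro φ x j
    conv_lhs => rw [show x = ∑ i, x i • (Pi.single i 1 : Fin n → K) from idemAux_expand_pi x]
    rw [map_sum, Finset.sum_apply]
    apply Finset.sum_congr rfl
    intro i _
    have h1 : (Pi.single i 1 : Fin n → K) = (cv i)⁻¹ • vv i := by
      rw [hvv, smul_smul, inv_mul_cancel₀ (hcv0 i), one_smul]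
    rw [map_smul, Pi.smul_apply, h1, map_smul, Pi.smul_apply, smul_eq_mul, smul_eq_mul]
  -- value of Φ a on the rescaled basis
  have hval : ∀ a (i : Fin n) (j : Fin m), Φ a (vv i) j = a i j * dw j := by
    intro a i j
    rw [hΦ]
    rw [Finset.sum_eq_single i]
    · rw [hvv]
      simp only [Pi.smul_apply, smul_eq_mul, Pi.single_eq_same, mul_one]
      rw [mul_assoc, inv_mul_cancel₀ (hcv0 i), mul_one]
    · intro i' _ hne
      rw [hvv]
      simp [Pi.single_apply, Ne.symm hne]
    · simp
  -- equivariance of Φ a for invariant a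
  have key1 : ∀ (a : Fin n → Fin m → K), (∀ (g : G) (i : Fin n) (j : Fin m),
        a (σV g i) (σW g j) = a i j) →
      ∀ (g : G) (x : Fin n → K), Φ a (ρ g x) = η g (Φ a x) := by
    intro a ha g x
    funext j'
    obtain ⟨j, rfl⟩ := hsurjW g j'
    rw [hcoordW g _ j, hΦ, hΦ]
    calc ∑ i, a i (σW g j) * dw (σW g j) * (cv i)⁻¹ * (ρ g x) i
        = ∑ i, a (σV g i) (σW g j) * dw (σW g j) * (cv (σV g i))⁻¹ * (ρ g x) (σV g i) :=
          (Fintype.sum_bijective (σV g)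
            ⟨idemAux_sigma_inj ρ σV cV hcV hsV g, idemAux_sigma_surj ρ σV cV hcV hsV g⟩
            _ _ (fun i => rfl)).symm
      _ = ∑ i, cW g j * (a i j * dw j * (cv i)⁻¹ * x i) := by
          apply Finset.sum_congr rfl
          intro i _
          rw [ha, hwscale, hscale, hcoordV]
          have h1 := hcV g i
          have h2 := hcv0 i
          field_simp
      _ = cW g j * ∑ i, a i j * dw j * (cv i)⁻¹ * x i := by rw [Finset.mul_sum]
  -- invariance of the coefficient function of an equivariant map
  have key2 : ∀ (φ : (Fin n → K) →ₗ[K] (Fin m → K)),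
      (∀ (g : G) (x : Fin n → K), φ (ρ g x) = η g (φ x)) →
      ∀ (g : G) (i : Fin n) (j : Fin m),
        φ (vv (σV g i)) (σW g j) * (dw (σW g j))⁻¹ = φ (vv i) j * (dw j)⁻¹ := by
    intro φ hφ g i j
    rw [← hmove, hφ, hcoordW, hwscale]
    have h1 := hcW g j
    have h2 := hdw0 j
    field_simp
  -- round trips for the first equivalence
  have key3 : ∀ (φ : (Fin n → K) →ₗ[K] (Fin m → K)),
      Φ (fun i j => φ (vv i) j * (dw j)⁻¹) = φ := by
    intro φ
    apply LinearMap.ext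
    intro x
    funext j
    rw [hΦ, hexp φ x j]
    apply Finset.sum_congr rfl
    intro i _
    have h1 := hdw0 j
    have h2 := hcv0 i
    field_simp
  have key4 : ∀ a (i : Fin n) (j : Fin m), Φ a (vv i) j * (dw j)⁻¹ = a i j := by
    intro a i j
    rw [hval, mul_assoc, mul_inv_cancel₀ (hdw0 j), mul_one]
  -- respects doset relation
  have hresp : ∀ (a : Fin n → Fin m → K), (∀ (g : G) (i : Fin n) (j : Fin m),
        a (σV g i) (σW g j) = a i j) →
      ∀ (g g' : G), (DoubleCoset.setoid (HV : Set G) (HW : Set G)) g g' →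
        a i₀ (σW g j₀) = a i₀ (σW g' j₀) := by
    intro a ha g g' hgg'
    obtain ⟨h, hh, w, hw, rfl⟩ := DoubleCoset.rel_iff.1 hgg'
    have hσ : σW (h * g * w) j₀ = σW h (σW g j₀) := by
      rw [(hmulW _ _ _).1, (hHW' w).1 hw, (hmulW _ _ _).1]
    calc a i₀ (σW g j₀) = a (σV h i₀) (σW h (σW g j₀)) := (ha h i₀ (σW g j₀)).symm
      _ = a i₀ (σW h (σW g j₀)) := by rw [(hHV' h).1 hh]
      _ = a i₀ (σW (h * g * w) j₀) := by rw [hσ]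
  -- invariance of pulled-back doset functions
  have hDinv : ∀ (f : DoubleCoset.Quotient (HV : Set G) (HW : Set G) → K) (g : G)
      (i : Fin n) (j : Fin m),
      f (DoubleCoset.mk HV HW ((gc (σV g i))⁻¹ * kc (σW g j))) =
        f (DoubleCoset.mk HV HW ((gc i)⁻¹ * kc j)) := by
    intro f g i j
    have hw : (kc j)⁻¹ * (g⁻¹ * kc (σW g j)) ∈ HW := by
      have h2 := hstabW g⁻¹ (σW g j)
      rw [hlinvW] at h2
      exact h2
    have heq : DoubleCoset.mk HV HW ((gc i)⁻¹ * kc j) =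
        DoubleCoset.mk HV HW ((gc (σV g i))⁻¹ * kc (σW g j)) :=
      (DoubleCoset.eq HV HW _ _).2 ⟨(gc (σV g i))⁻¹ * (g * gc i), hstabV g i,
        (kc j)⁻¹ * (g⁻¹ * kc (σW g j)), hw, by group⟩
    rw [heq]
  -- round trips for the second equivalence
  have hL : ∀ (a : Fin n → Fin m → K), (∀ (g : G) (i : Fin n) (j : Fin m),
        a (σV g i) (σW g j) = a i j) →
      ∀ (i : Fin n) (j : Fin m), a i₀ (σW ((gc i)⁻¹ * kc j) j₀) = a i j := by
    intro a ha i j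
    have hσ : σW ((gc i)⁻¹ * kc j) j₀ = σW (gc i)⁻¹ j := by
      rw [(hmulW _ _ _).1, hkc]
    rw [hσ]
    calc a i₀ (σW (gc i)⁻¹ j)
        = a (σV (gc i) i₀) (σW (gc i) (σW (gc i)⁻¹ j)) := (ha (gc i) i₀ _).symm
      _ = a i j := by rw [hgc, hrinvW]
  have hR : ∀ (f : DoubleCoset.Quotient (HV : Set G) (HW : Set G) → K) (g : G),
      f (DoubleCoset.mk HV HW ((gc i₀)⁻¹ * kc (σW g j₀))) = f (DoubleCoset.mk HV HW g) := by
    intro f g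
    have hwmem : (kc (σW g j₀))⁻¹ * g ∈ HW := by
      rw [hHW', (hmulW _ _ _).1]
      have h2 := hlinvW (kc (σW g j₀)) j₀
      rw [hkc] at h2
      exact h2
    have heq : DoubleCoset.mk HV HW ((gc i₀)⁻¹ * kc (σW g j₀)) = DoubleCoset.mk HV HW g :=
      (DoubleCoset.eq HV HW _ _).2 ⟨gc i₀, (hHV' _).2 (hgc i₀), (kc (σW g j₀))⁻¹ * g, hwmem, by group⟩
    rw [heq]
  -- assemble the equivalence
  refine ⟨Equiv.trans (β := {a : Fin n → Fin m → K // ∀ (g : G) (i : Fin n) (j : Fin m),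
      a (σV g i) (σW g j) = a i j}) ?_ ?_⟩
  · exact { toFun := fun φ => ⟨fun i j => φ.1 (vv i) j * (dw j)⁻¹, key2 φ.1 φ.2⟩
            invFun := fun a => ⟨Φ a.1, key1 a.1 a.2⟩
            left_inv := fun φ => Subtype.ext (key3 φ.1)
            right_inv := fun a => Subtype.ext (funext fun i => funext fun j => key4 a.1 i j) }
  · exact { toFun := fun a q => Quotient.liftOn' q (fun g => a.1 i₀ (σW g j₀)) (hresp a.1 a.2)
            invFun := fun f => ⟨fun i j => f (DoubleCoset.mk HV HW ((gc i)⁻¹ * kc j)), hDinv f⟩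
            left_inv := fun a => Subtype.ext (funext fun i => funext fun j => hL a.1 a.2 i j)
            right_inv := fun f => funext fun q => Quotient.inductionOn' q (fun g => hR f g) }
end

section
/- Let K be a semiring, G a finite group, and M a K[G]-module that is weakly reflexive as a K-module and whose K-dual M^∨ = Hom_K(M,K) is finitely generated as a K-module. Then M is isomorphic as a K[G]-module to a submodule of K[G]^n for some n. -/
/-- Let `K` be a semiring, `G` a finite group, and `M` a `K[G]`-module (a
`K`-module with a `K`-linear `G`-action) which is weakly reflexive as a
`K`-module and whose `K`-dual is finitely generated.  Then `M` embeds
`G`-equivariantly and `K`-linearly into `K[G]^n` for some `n`, where `G` acts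
on `K[G]` by left multiplication. -/
theorem embeds_into_power_of_group_algebra
    (K G M : Type*) [CommSemiring K] [Group G] [Fintype G]
    [AddCommMonoid M] [Module K M] [DistribMulAction G M] [SMulCommClass G K M]
    (hwr : Function.Injective (Module.Dual.eval K M))
    (hfg : Module.Finite K (Module.Dual K M)) :
    ∃ (n : ℕ) (f : M →ₗ[K] (Fin n → MonoidAlgebra K G)),
      Function.Injective f ∧
      ∀ (g : G) (x : M) (i : Fin n),
        f (g • x) i = MonoidAlgebra.single g (1 : K) * f x i := by
  obtain ⟨n, φ, hφ⟩ := Module.Finite.exists_fin (R := K) (M := Module.Dual K M)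
  refine ⟨n, ⟨⟨fun x i => ∑ g : G, MonoidAlgebra.single g (φ i (g⁻¹ • x)), ?_⟩, ?_⟩, ?_, ?_⟩
  · intro x y
    funext i
    simp [smul_add, map_add, Finsupp.single_add, Finset.sum_add_distrib]
  · intro c x
    funext i
    simp only [Pi.smul_apply, Finset.smul_sum]
    refine Finset.sum_congr rfl fun g _ => ?_
    rw [smul_comm g⁻¹ c x, map_smul]
    exact (MonoidAlgebra.smul_single c g _).symm
  · intro x y h
    have key : ∀ i, φ i x = φ i y := by
      intro i
      have h1 : ∀ z : M,
          (∑ g : G, MonoidAlgebra.single g (φ i (g⁻¹ • z)) : MonoidAlgebra K G).coeff 1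
            = φ i z := by
        intro z
        rw [MonoidAlgebra.coeff_sum, Finset.sum_apply']
        rw [Finset.sum_eq_single (1 : G)]
        · simp
        · intro g _ hg
          exact Finsupp.single_eq_of_ne' hg
        · simp
      have := congrFun (congrArg (fun v => (v i).coeff) h) (1 : G)
      simp only [LinearMap.coe_mk, AddHom.coe_mk] at this
      simpa only [h1] using this
    apply hwr
    ext ψ
    have hmem : ψ ∈ Submodule.span K (Set.range φ) := hφ ▸ Submodule.mem_top
    simp only [Module.Dual.eval_apply]
    refine Submodule.span_induction (p := fun ψ _ => ψ x = ψ y) ?_ ?_ ?_ ?_ hmem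
    · rintro _ ⟨i, rfl⟩; exact key i
    · simp
    · intro a b _ _ ha hb; simp [ha, hb]
    · intro c a _ ha; simp [ha]
  · intro g x i
    simp only [LinearMap.coe_mk, AddHom.coe_mk, Finset.mul_sum]
    refine Fintype.sum_equiv (Equiv.mulLeft g⁻¹) _ _ fun h => ?_
    simp [MonoidAlgebra.single_mul_single, mul_smul, mul_inv_rev, inv_smul_smul]
end

section
/- Let G be a finite group and M a finitely generated 𝔹[G]-module. Then M is isomorphic as a 𝔹[G]-module to a submodule of 𝔹[G]^n for some natural number n. -/
open Classical in
noncomputable def boolPhi {B M : Type*} [Zero B] [One B] [AddCommMonoid M]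
    (m x : M) : B := if x + m = m then 0 else 1

section Aux
variable {B M : Type*} [CommSemiring B] [AddCommMonoid M] [Module B M]

theorem boolIdem (hidem : (1 : B) + 1 = 1) [Module B M] (x : M) : x + x = x := by
  have : ((1 : B) + 1) • x = x := by rw [hidem, one_smul]
  rwa [add_smul, one_smul] at this

theorem boolLe (hidem : (1 : B) + 1 = 1) (x y m : M) (h : x + y + m = m) : x + m = m := by
  conv_lhs => rw [← h]
  rw [← add_assoc, ← add_assoc, boolIdem (B := B) hidem x]
  exact h

theorem boolPhi_add (hidem : (1 : B) + 1 = 1) (m x y : M) :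
    (boolPhi m (x + y) : B) = boolPhi m x + boolPhi m y := by
  unfold boolPhi
  by_cases hx : x + m = m
  · by_cases hy : y + m = m
    · have : x + y + m = m := by rw [add_assoc, hy, hx]
      simp [this, hx, hy]
    · have : ¬ (x + y + m = m) := fun h => hy (boolLe (B := B) hidem y x m (by rwa [add_comm y x]))
      simp [this, hx, hy]
  · have h2 : ¬ (x + y + m = m) := fun h => hx (boolLe (B := B) hidem x y m h)
    by_cases hy : y + m = m
    · simp [h2, hx, hy]
    · simp only [h2, hx, hy, if_neg, if_false]
      exact hidem.symm

theorem boolPhi_smul (htwo : ∀ a : B, a = 0 ∨ a = 1) (m x : M) (c : B) :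
    (boolPhi m (c • x) : B) = c * boolPhi m x := by
  rcases htwo c with rfl | rfl
  · simp [boolPhi]
  · rw [one_smul, one_mul]

theorem boolPhi_sep (hidem : (1 : B) + 1 = 1) (hne : (0 : B) ≠ 1) (x y : M)
    (hxy : ∀ m : M, (boolPhi m x : B) = boolPhi m y) : x = y := by
  have h1 : (boolPhi y x : B) = 0 := by
    rw [hxy y]; simp [boolPhi, boolIdem (B := B) hidem y]
  have h2 : (boolPhi x y : B) = 0 := by
    rw [← hxy x]; simp [boolPhi, boolIdem (B := B) hidem x]
  by_cases hx : x + y = y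
  · by_cases hy : y + x = x
    · rw [← hy, add_comm, hx]
    · simp only [boolPhi, hy, if_neg, if_false] at h2
      exact absurd h2.symm hne
  · simp only [boolPhi, hx, if_neg, if_false] at h1
    exact absurd h1.symm hne

end Aux

/-- Every finitely generated `𝔹[G]`-module `M` (for `G` a finite group and
`𝔹` the Boolean semifield, here an arbitrary two-element idempotent semiring
`B`) embeds `G`-equivariantly and `B`-linearly into `𝔹[G]^n` for some `n`,
where `G` acts on `𝔹[G]` by left multiplication. -/
theorem boolean_module_embeds_into_power_of_group_algebra
    (B G M : Type*) [CommSemiring B]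
    (htwo : ∀ a : B, a = 0 ∨ a = 1) (hidem : (1 : B) + 1 = 1) (hne : (0 : B) ≠ 1)
    [Group G] [Fintype G]
    [AddCommMonoid M] [Module B M] [Module.Finite B M]
    [DistribMulAction G M] [SMulCommClass G B M] :
    ∃ (n : ℕ) (f : M →ₗ[B] (Fin n → MonoidAlgebra B G)),
      Function.Injective f ∧
      ∀ (g : G) (x : M) (i : Fin n),
        f (g • x) i = MonoidAlgebra.single g (1 : B) * f x i := by
  classical
  -- B is finite
  have hBfin : Finite B := Finite.of_surjective (fun b : Bool => if b then (1 : B) else 0)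
    (fun a => by rcases htwo a with rfl | rfl
                 exacts [⟨false, rfl⟩, ⟨true, rfl⟩])
  -- M is finite
  have hMfin : Finite M := by
    obtain ⟨s, hs⟩ := Module.Finite.fg_top (R := B) (M := M)
    refine Finite.of_surjective
      (fun f : ({v // v ∈ s} → B) => ∑ v ∈ s.attach, f v • v.1) ?_
    intro x
    have hx : x ∈ Submodule.span B (s : Set M) := hs ▸ Submodule.mem_top
    rw [Submodule.mem_span_finset] at hx
    obtain ⟨f, -, hf⟩ := hx
    refine ⟨fun v => f v.1, ?_⟩
    rw [← hf, ← Finset.sum_attach s (fun v => f v • v)]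
  have : Fintype M := Fintype.ofFinite M
  obtain ⟨e, hesurj⟩ : ∃ e : Fin (Fintype.card M) → M, Function.Surjective e :=
    ⟨fun i => (Fintype.equivFin M).symm i, (Fintype.equivFin M).symm.surjective⟩
  refine ⟨Fintype.card M,
    ⟨⟨fun x i => ∑ g : G, MonoidAlgebra.single g (boolPhi (e i) (g⁻¹ • x) : B), ?_⟩, ?_⟩, ?_, ?_⟩
  · intro x y
    funext i
    simp only [Pi.add_apply]
    rw [← Finset.sum_add_distrib]
    refine Finset.sum_congr rfl fun g _ => ?_
    rw [smul_add, boolPhi_add (B := B) hidem, MonoidAlgebra.single_add]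
  · intro c x
    funext i
    simp only [Pi.smul_apply, RingHom.id_apply]
    rw [Finset.smul_sum]
    refine Finset.sum_congr rfl fun g _ => ?_
    rw [smul_comm, boolPhi_smul (B := B) htwo, ← MonoidAlgebra.smul_single']
  · -- injectivity
    intro x y hxy
    simp only [LinearMap.coe_mk, AddHom.coe_mk] at hxy
    refine boolPhi_sep (B := B) hidem hne x y fun m => ?_
    obtain ⟨i, rfl⟩ := hesurj m
    have key : ∀ z : M,
        (∑ g : G, MonoidAlgebra.single g (boolPhi (e i) (g⁻¹ • z) : B) :
          MonoidAlgebra B G).coeff (1 : G) = (boolPhi (e i) z : B) := by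
      intro z
      rw [MonoidAlgebra.coeff_sum, Finset.sum_apply']
      simp [MonoidAlgebra.coeff_single_apply, Finsupp.single_apply, Finset.sum_ite_eq']
    have h0 := congrFun hxy i
    have h1 := congrArg (fun v : MonoidAlgebra B G => v.coeff (1 : G)) h0
    simpa only [key] using h1
  · intro g x i
    simp only [LinearMap.coe_mk, AddHom.coe_mk]
    rw [Finset.mul_sum]
    simp only [MonoidAlgebra.single_mul_single, one_mul]
    refine Fintype.sum_equiv (Equiv.mulLeft g⁻¹) _ _ fun k => ?_
    simp [mul_smul]
end

section
/- Let G be a finite group and K a zero-sum-free semifield. Every indecomposable representation of G over K has dimension dividing the order of G. -/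
/-- Every indecomposable representation `V = K^n` of a finite group `G` over
a zero-sum-free semifield `K` (indecomposable: nonzero, and not an internal
direct sum of two nonzero invariant submodules) has dimension dividing the
order of `G`. -/
theorem indecomposable_dimension_dvd_card
    (K G : Type*) [Semifield K] [Group G] [Fintype G]
    (hzsf : ∀ a b : K, a + b = 0 → a = 0 ∧ b = 0)
    (n : ℕ) (ρ : Representation K G (Fin n → K))
    (hindec : (∃ x : Fin n → K, x ≠ 0) ∧
      ¬ ∃ p q : Submodule K (Fin n → K),
        (∀ g : G, ∀ y ∈ p, ρ g y ∈ p) ∧ (∀ g : G, ∀ y ∈ q, ρ g y ∈ q) ∧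
        p ≠ ⊥ ∧ q ≠ ⊥ ∧
        ∀ z : Fin n → K, ∃! w : p × q, (w.1 : Fin n → K) + (w.2 : Fin n → K) = z) :
    n ∣ Fintype.card G := by
  classical
  obtain ⟨hne, hdec⟩ := hindec
  -- dispose of n = 0
  rcases Nat.eq_zero_or_pos n with rfl | hn
  · obtain ⟨x, hx⟩ := hne
    exact (hx (funext fun i => i.elim0)).elim
  -- zero-sum-freeness for finite sums
  have hsum : ∀ (s : Finset (Fin n)) (f : Fin n → K), ∑ i ∈ s, f i = 0 → ∀ i ∈ s, f i = 0 := by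
    intro s
    induction s using Finset.cons_induction with
    | empty => simp
    | cons a s ha ih =>
      intro f h i hi
      rw [Finset.sum_cons] at h
      obtain ⟨h1, h2⟩ := hzsf _ _ h
      rcases Finset.mem_cons.mp hi with rfl | hi
      · exact h1
      · exact ih f h2 i hi
  set A : G → Fin n → Fin n → K := fun g i k => ρ g (Pi.single k 1) i with hA
  have happly : ∀ (g : G) (x : Fin n → K) (i : Fin n), ρ g x i = ∑ k, x k * A g i k := by
    intro g x i
    have hx : x = ∑ k, x k • (Pi.single k 1 : Fin n → K) := by
      funext j
      rw [Finset.sum_apply]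
      simp [Pi.single_apply]
    conv_lhs => rw [hx]
    rw [map_sum, Finset.sum_apply]
    refine Finset.sum_congr rfl fun k _ => ?_
    rw [map_smul]
    simp [hA, smul_eq_mul]
  have hmul : ∀ (g h : G) (i k : Fin n), A (g*h) i k = ∑ m, A h m k * A g i m := by
    intro g h i k
    have h1 : ρ (g*h) (Pi.single k 1) = ρ g (ρ h (Pi.single k 1)) := by
      rw [map_mul]; rfl
    show ρ (g*h) (Pi.single k 1) i = _
    rw [h1, happly]
  have hone : ∀ i k : Fin n, A 1 i k = if i = k then 1 else 0 := by
    intro i k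
    show ρ 1 (Pi.single k 1) i = _
    rw [map_one]
    simp [Pi.single_apply]
  have hex : ∀ (g : G) (k : Fin n), ∃ i, A g i k ≠ 0 ∧ A g⁻¹ k i ≠ 0 := by
    intro g k
    by_contra hc
    push_neg at hc
    have h1 : A (g⁻¹ * g) k k = 1 := by rw [inv_mul_cancel]; simp [hone]
    rw [hmul] at h1
    have h0 : ∀ m ∈ Finset.univ, A g m k * A g⁻¹ k m = 0 := by
      intro m _
      rcases eq_or_ne (A g m k) 0 with h | h
      · rw [h, zero_mul]
      · rw [hc m h, mul_zero]
    rw [Finset.sum_eq_zero h0] at h1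
    exact one_ne_zero h1.symm
  have hoff : ∀ (g : G) (i j : Fin n), i ≠ j → ∀ k, A g⁻¹ k j * A g i k = 0 := by
    intro g i j hij k
    have h0 : A (g * g⁻¹) i j = 0 := by rw [mul_inv_cancel]; simp [hone, hij]
    rw [hmul] at h0
    exact hsum _ _ h0 k (Finset.mem_univ k)
  have key : ∀ (g : G) (k : Fin n), ∃! i, A g i k ≠ 0 := by
    intro g k
    obtain ⟨j, hj1, hj2⟩ := hex g k
    refine ⟨j, hj1, fun i hi => ?_⟩
    by_contra hij
    rcases mul_eq_zero.mp (hoff g i j hij k) with h | h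
    · exact hj2 h
    · exact hi h
  choose τ hτ using key
  have hτ1 : ∀ g k, A g (τ g k) k ≠ 0 := fun g k => (hτ g k).1
  have hτ2 : ∀ g k i, A g i k ≠ 0 → i = τ g k := fun g k i h => (hτ g k).2 i h
  have hτmul : ∀ (g h : G) (k : Fin n), τ (g*h) k = τ g (τ h k) := by
    intro g h k
    refine (hτ2 (g*h) k _ ?_).symm
    rw [hmul]
    intro h0
    rcases mul_eq_zero.mp (hsum _ _ h0 (τ h k) (Finset.mem_univ _)) with h' | h'
    · exact hτ1 h k h'
    · exact hτ1 g (τ h k) h'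
  have hτone : ∀ k, τ 1 k = k := by
    intro k
    exact (hτ2 1 k k (by simp [hone])).symm
  have hτinv : ∀ (g : G) (k : Fin n), τ g⁻¹ (τ g k) = k := by
    intro g k
    rw [← hτmul, inv_mul_cancel, hτone]
  -- transitivity of the permutation action
  have htrans : ∀ k k' : Fin n, ∃ g : G, τ g k = k' := by
    by_contra hc
    push_neg at hc
    obtain ⟨k0, k1, hk⟩ := hc
    apply hdec
    set S : Set (Fin n) := {j | ∃ g : G, τ g k0 = j} with hS
    have hk0S : k0 ∈ S := ⟨1, hτone k0⟩
    have hk1S : k1 ∉ S := fun ⟨g, hg⟩ => hk g hg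
    refine ⟨Submodule.pi Sᶜ (fun _ => ⊥), Submodule.pi S (fun _ => ⊥), ?_, ?_, ?_, ?_, ?_⟩
    · -- invariance of p
      intro g y hy
      rw [Submodule.mem_pi] at hy ⊢
      intro i hi
      rw [Submodule.mem_bot]
      rw [happly]
      apply Finset.sum_eq_zero
      intro k _
      by_cases hkS : k ∈ S
      · rcases eq_or_ne (A g i k) 0 with h | h
        · rw [h, mul_zero]
        · exfalso
          apply hi
          obtain ⟨h', rfl⟩ := hkS
          exact ⟨g * h', (hτmul g h' k0).trans (hτ2 g _ i h).symm⟩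
      · rw [(Submodule.mem_bot K).mp (hy k hkS), zero_mul]
    · -- invariance of q
      intro g y hy
      rw [Submodule.mem_pi] at hy ⊢
      intro i hi
      rw [Submodule.mem_bot]
      rw [happly]
      apply Finset.sum_eq_zero
      intro k _
      by_cases hkS : k ∈ S
      · rw [(Submodule.mem_bot K).mp (hy k hkS), zero_mul]
      · rcases eq_or_ne (A g i k) 0 with h | h
        · rw [h, mul_zero]
        · exfalso
          apply hkS
          obtain ⟨h', hh'⟩ := hi
          have hik : i = τ g k := hτ2 g k i h
          refine ⟨g⁻¹ * h', ?_⟩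
          rw [hτmul, hh', hik, hτinv]
    · -- p ≠ ⊥
      rw [Submodule.ne_bot_iff]
      refine ⟨Pi.single k0 1, ?_, ?_⟩
      · rw [Submodule.mem_pi]
        intro i hi
        rw [Submodule.mem_bot]
        exact Pi.single_eq_of_ne (by rintro rfl; exact hi hk0S) 1
      · intro h
        have := congrFun h k0
        rw [Pi.single_eq_same] at this
        exact one_ne_zero this
    · -- q ≠ ⊥
      rw [Submodule.ne_bot_iff]
      refine ⟨Pi.single k1 1, ?_, ?_⟩
      · rw [Submodule.mem_pi]
        intro i hi
        rw [Submodule.mem_bot]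
        exact Pi.single_eq_of_ne (by rintro rfl; exact hk1S hi) 1
      · intro h
        have := congrFun h k1
        rw [Pi.single_eq_same] at this
        exact one_ne_zero this
    · -- unique decomposition
      intro z
      refine ⟨(⟨fun i => if i ∈ S then z i else 0, ?_⟩, ⟨fun i => if i ∈ S then 0 else z i, ?_⟩),
        ?_, ?_⟩
      · rw [Submodule.mem_pi]
        intro i hi
        rw [Submodule.mem_bot]
        exact if_neg hi
      · rw [Submodule.mem_pi]
        intro i hi
        rw [Submodule.mem_bot]
        simp [hi]
      · funext i
        by_cases hi : i ∈ S <;> simp [hi]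
      · rintro ⟨⟨x, hx⟩, ⟨y, hy⟩⟩ hw
        rw [Submodule.mem_pi] at hx hy
        have hw' : ∀ i, x i + y i = z i := fun i => congrFun hw i
        have hx0 : ∀ i, i ∉ S → x i = 0 := fun i hi => (Submodule.mem_bot K).mp (hx i hi)
        have hy0 : ∀ i, i ∈ S → y i = 0 := fun i hi => (Submodule.mem_bot K).mp (hy i hi)
        refine Prod.ext (Subtype.ext (funext fun i => ?_)) (Subtype.ext (funext fun i => ?_))
        · by_cases hi : i ∈ S
          · simp [hi, ← hw' i, hy0 i hi]
          · simp [hi, hx0 i hi]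
        · by_cases hi : i ∈ S
          · simp [hi, hy0 i hi]
          · simp [hi, ← hw' i, hx0 i hi]
  -- conclude via orbit-stabilizer
  let φ : G →* Equiv.Perm (Fin n) :=
    { toFun := fun g => ⟨τ g, τ g⁻¹, fun k => hτinv g k, fun k => by simpa using hτinv g⁻¹ k⟩
      map_one' := Equiv.ext fun k => hτone k
      map_mul' := fun g h => Equiv.ext fun k => hτmul g h k }
  letI : MulAction G (Fin n) := MulAction.compHom (Fin n) φ
  have hsmul : ∀ (g : G) (k : Fin n), g • k = τ g k := fun g k => rfl
  obtain ⟨k⟩ := Fin.pos_iff_nonempty.mp hn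
  have horb : MulAction.orbit G k = Set.univ := by
    ext j
    simp only [Set.mem_univ, iff_true, MulAction.mem_orbit_iff]
    obtain ⟨g, hg⟩ := htrans k j
    exact ⟨g, by rw [hsmul]; exact hg⟩
  have hcard : Fintype.card (MulAction.orbit G k) = n := by
    rw [Fintype.card_congr ((Equiv.setCongr horb).trans (Equiv.Set.univ (Fin n)))]
    exact Fintype.card_fin n
  have := MulAction.card_orbit_mul_card_stabilizer_eq_card_group G k
  exact ⟨Fintype.card (MulAction.stabilizer G k), by rw [← this, hcard]⟩
end
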